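/- arXiv:2009.03056 — 3 statements merged into one kernel-verified Lean document; each statement's English description precedes it below -/
import Mathlib

section
/- Let Z be a random variable with E|Z|^k < ∞ and EZ = 0 for some integer k ≥ 2, and let (Z_i)_{i≥1} be an l-dependent sequence of copies of Z for some natural l (i.e., for all n the families (Z_1, …, Z_n) and (Z_i : i ≥ n+l) are independent). Fix ε > 0, set S_n = Z_1 + ⋯ + Z_n and M = sup_{n≥0} (S_n − nε). Then E M^{k−1} < ∞. -/
open Set Filter Topology MeasureTheory ProbabilityTheory Pointwise

noncomputable section

/-- Coercion of an integer vector to a real vector. -/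
def zc {m : ℕ} (x : Fin m → ℤ) : Fin m → ℝ := fun i => (x i : ℝ)

/-- Convex conical hull: all finite nonnegative real combinations of elements of `A`. -/
def coneHull {m : ℕ} (A : Set (Fin m → ℝ)) : Set (Fin m → ℝ) :=
  { x | ∃ (s : Finset (Fin m → ℝ)) (w : (Fin m → ℝ) → ℝ),
      ↑s ⊆ A ∧ (∀ a ∈ s, 0 ≤ w a) ∧ x = ∑ a ∈ s, w a • a }

namespace Stmt14Aux

open Finset

/-- binomial coefficient bound -/
lemma choose_le_two_pow (k m : ℕ) : k.choose m ≤ 2 ^ k := by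
  rcases le_or_gt m k with h | h
  · calc k.choose m ≤ ∑ i ∈ range (k+1), k.choose i :=
        Finset.single_le_sum (fun i _ => Nat.zero_le _) (Finset.mem_range.2 (by omega))
    _ = 2 ^ k := Nat.sum_range_choose k
  · rw [Nat.choose_eq_zero_of_lt h]; positivity

/-- measurability of finite sup' -/
lemma measurable_sup' {Ω : Type*} [MeasurableSpace Ω] {ι : Type*} (s : Finset ι)
    (hs : s.Nonempty) (f : ι → Ω → ℝ) (hf : ∀ i, Measurable (f i)) :
    Measurable fun a => s.sup' hs fun i => f i a := by
  refine Finset.Nonempty.cons_induction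
    (motive := fun s hs => Measurable fun a => s.sup' hs fun i => f i a)
    (fun i => by simpa using hf i) (fun a s ha hs ih => ?_) hs
  show Measurable fun x => (Finset.cons a s ha).sup' (Finset.cons_nonempty ha) fun i => f i x
  have h2 : (fun x : Ω => (Finset.cons a s ha).sup' (Finset.cons_nonempty ha) fun i => f i x)
      = fun x => (f a x) ⊔ (s.sup' hs fun i => f i x) := funext fun x => Finset.sup'_cons hs _
  rw [h2]
  exact (hf a).max ih

lemma key_pow2 {k j : ℕ} {w R : ℝ} (hw : 0 ≤ w) (hR : 1 ≤ R) (hj2 : 2 ≤ j) (hjk : j ≤ k) :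
    w ^ (k - j) ≤ w ^ (k - 1) / R + R ^ (k - j) := by
  have hR0 : (0:ℝ) < R := lt_of_lt_of_le one_pos hR
  rcases le_total w R with h | h
  · have h1 : w ^ (k - j) ≤ R ^ (k - j) := pow_le_pow_left₀ hw h _
    have h2 : (0:ℝ) ≤ w ^ (k-1) / R := div_nonneg (pow_nonneg hw _) hR0.le
    linarith
  · have hw1 : (1:ℝ) ≤ w := le_trans hR h
    have h1 : w ^ (k - j) ≤ w ^ (k - 1) / R := by
      rw [le_div_iff₀ hR0]
      calc w ^ (k - j) * R ≤ w ^ (k - j) * w := by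
            exact mul_le_mul_of_nonneg_left h (pow_nonneg hw _)
        _ = w ^ (k - j + 1) := (pow_succ w _).symm
        _ ≤ w ^ (k - 1) := pow_le_pow_right₀ hw1 (by omega)
    have h2 : (0:ℝ) ≤ R ^ (k - j) := pow_nonneg hR0.le _
    linarith

lemma key_pow1 {k : ℕ} (hk : 2 ≤ k) {w x : ℝ} (hw : 0 ≤ w) :
    max 0 (w + x) ^ k ≤ w ^ k + (k:ℝ) * w ^ (k-1) * x
      + 2 ^ k * ∑ j ∈ Finset.Icc 2 k, w ^ (k - j) * |x| ^ j := by
  have hsum_nonneg : (0:ℝ) ≤ ∑ j ∈ Finset.Icc 2 k, w ^ (k - j) * |x| ^ j :=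
    Finset.sum_nonneg fun j _ => mul_nonneg (pow_nonneg hw _) (pow_nonneg (abs_nonneg x) _)
  rcases le_or_gt 0 (w + x) with h | h
  · rw [max_eq_right h, add_pow]
    have hsplit : range (k+1) = insert k (insert (k-1) (range (k-1))) := by
      ext m; simp only [Finset.mem_range, Finset.mem_insert]; omega
    rw [hsplit, Finset.sum_insert (by simp only [Finset.mem_insert, Finset.mem_range]; omega),
      Finset.sum_insert (by simp only [Finset.mem_range]; omega)]
    have e1 : w ^ k * x ^ (k - k) * (k.choose k : ℝ) = w ^ k := by
      simp [Nat.sub_self, Nat.choose_self]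
    have hck : k.choose (k-1) = k := by
      have h := Nat.choose_symm (n:=k) (k:=k-1) (Nat.sub_le k 1)
      rw [show k - (k-1) = 1 by omega, Nat.choose_one_right] at h
      exact h.symm
    have e2 : w ^ (k-1) * x ^ (k - (k-1)) * (k.choose (k-1) : ℝ) = (k:ℝ) * w ^ (k-1) * x := by
      rw [show k - (k-1) = 1 by omega, pow_one, hck]; ring
    rw [e1, e2]
    have hrest : ∑ m ∈ range (k-1), w ^ m * x ^ (k - m) * (k.choose m : ℝ)
        ≤ 2 ^ k * ∑ j ∈ Finset.Icc 2 k, w ^ (k - j) * |x| ^ j := by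
      calc ∑ m ∈ range (k-1), w ^ m * x ^ (k - m) * (k.choose m : ℝ)
          ≤ ∑ m ∈ range (k-1), 2 ^ k * (w ^ m * |x| ^ (k - m)) := by
            apply Finset.sum_le_sum
            intro m _
            have hx : x ^ (k - m) ≤ |x| ^ (k - m) := by
              rw [← abs_pow]; exact le_abs_self _
            have hc : (k.choose m : ℝ) ≤ 2 ^ k := by
              exact_mod_cast choose_le_two_pow k m
            have hcn : (0:ℝ) ≤ (k.choose m : ℝ) := Nat.cast_nonneg _
            have hwm : (0:ℝ) ≤ w ^ m := pow_nonneg hw _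
            have h1 : w ^ m * x ^ (k-m) ≤ w ^ m * |x| ^ (k-m) :=
              mul_le_mul_of_nonneg_left hx hwm
            have h2 : (0 : ℝ) ≤ w ^ m * |x| ^ (k - m) :=
              mul_nonneg hwm (pow_nonneg (abs_nonneg x) _)
            calc w ^ m * x ^ (k - m) * (k.choose m : ℝ)
                ≤ w ^ m * |x| ^ (k - m) * (k.choose m : ℝ) :=
                  mul_le_mul_of_nonneg_right h1 hcn
              _ ≤ w ^ m * |x| ^ (k - m) * 2 ^ k := mul_le_mul_of_nonneg_left hc h2
              _ = 2 ^ k * (w ^ m * |x| ^ (k - m)) := by ring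
        _ = 2 ^ k * ∑ m ∈ range (k-1), w ^ m * |x| ^ (k - m) := by
            rw [Finset.mul_sum]
        _ = 2 ^ k * ∑ j ∈ Finset.Icc 2 k, w ^ (k - j) * |x| ^ j := by
            congr 1
            apply Finset.sum_nbij' (fun m => k - m) (fun j => k - j)
            · intro m hm; simp only [Finset.mem_range] at hm; simp only [Finset.mem_Icc]; omega
            · intro j hj; simp only [Finset.mem_Icc] at hj; simp only [Finset.mem_range]; omega
            · intro m hm; simp only [Finset.mem_range] at hm; omega
            · intro j hj; simp only [Finset.mem_Icc] at hj; omega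
            · intro m hm; simp only [Finset.mem_range] at hm
              rw [show k - (k - m) = m by omega]
    linarith
  · rw [max_eq_left h.le]
    have hx0 : x < 0 := by linarith
    have habs : |x| = -x := abs_of_neg hx0
    have hwx : w ≤ |x| := by rw [habs]; linarith
    have h2mem : 2 ∈ Finset.Icc 2 k := by simp only [Finset.mem_Icc]; omega
    have hsingle : w ^ (k-2) * |x| ^ 2 ≤ ∑ j ∈ Finset.Icc 2 k, w ^ (k - j) * |x| ^ j :=
      Finset.single_le_sum (f := fun j => w ^ (k - j) * |x| ^ j)
        (fun j _ => mul_nonneg (pow_nonneg hw _) (pow_nonneg (abs_nonneg x) _)) h2mem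
    have hkle : (k:ℝ) ≤ 2 ^ k := by
      exact_mod_cast (Nat.lt_two_pow_self (n := k)).le
    have hw1 : w ^ (k-1) = w ^ (k-2) * w := by
      rw [← pow_succ]; congr 1; omega
    have hkey : (k:ℝ) * w ^ (k-1) * |x| ≤ 2 ^ k * (w ^ (k-2) * |x| ^ 2) := by
      have hb : w ^ (k-1) * |x| ≤ w ^ (k-2) * |x| ^ 2 := by
        rw [hw1, sq]
        have := mul_le_mul_of_nonneg_left hwx (mul_nonneg (pow_nonneg hw (k-2)) (abs_nonneg x))
        nlinarith [pow_nonneg hw (k-2), abs_nonneg x]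
      calc (k:ℝ) * w ^ (k-1) * |x| = (k:ℝ) * (w ^ (k-1) * |x|) := by ring
        _ ≤ 2 ^ k * (w ^ (k-1) * |x|) :=
            mul_le_mul_of_nonneg_right hkle
              (mul_nonneg (pow_nonneg hw _) (abs_nonneg x))
        _ ≤ 2 ^ k * (w ^ (k-2) * |x| ^ 2) :=
            mul_le_mul_of_nonneg_left hb (by positivity)
    have hxneg : (k:ℝ) * w ^ (k-1) * x = -((k:ℝ) * w ^ (k-1) * |x|) := by
      rw [habs]; ring
    have hpow : (0:ℝ) ≤ w ^ k := pow_nonneg hw _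
    have h2k : 2 ^ k * (w ^ (k-2) * |x| ^ 2) ≤ 2 ^ k * ∑ j ∈ Finset.Icc 2 k, w ^ (k - j) * |x| ^ j :=
      mul_le_mul_of_nonneg_left hsingle (by positivity)
    rw [zero_pow (by omega : k ≠ 0)]
    linarith

/-- combined pointwise bound -/
lemma key_pow {k : ℕ} (hk : 2 ≤ k) {w x R : ℝ} (hw : 0 ≤ w) (hR : 1 ≤ R) :
    max 0 (w + x) ^ k ≤ w ^ k + (k:ℝ) * w ^ (k-1) * x
      + 2 ^ k / R * (w ^ (k-1) * ∑ j ∈ Finset.Icc 2 k, |x| ^ j)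
      + 2 ^ k * R ^ k * ∑ j ∈ Finset.Icc 2 k, |x| ^ j := by
  have hR0 : (0:ℝ) < R := lt_of_lt_of_le one_pos hR
  have h1 := key_pow1 hk (x := x) hw
  have h2 : ∑ j ∈ Finset.Icc 2 k, w ^ (k - j) * |x| ^ j
      ≤ ∑ j ∈ Finset.Icc 2 k, (w ^ (k-1) / R + R ^ k) * |x| ^ j := by
    apply Finset.sum_le_sum
    intro j hj
    simp only [Finset.mem_Icc] at hj
    have := key_pow2 (k := k) (j := j) hw hR hj.1 hj.2
    have hRk : R ^ (k - j) ≤ R ^ k := pow_le_pow_right₀ hR (by omega)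
    have : w ^ (k - j) ≤ w ^ (k-1)/R + R ^ k := by linarith
    exact mul_le_mul_of_nonneg_right this (pow_nonneg (abs_nonneg x) _)
  have h3 : 2 ^ k * ∑ j ∈ Finset.Icc 2 k, w ^ (k - j) * |x| ^ j
      ≤ 2 ^ k / R * (w ^ (k-1) * ∑ j ∈ Finset.Icc 2 k, |x| ^ j)
        + 2 ^ k * R ^ k * ∑ j ∈ Finset.Icc 2 k, |x| ^ j := by
    calc 2 ^ k * ∑ j ∈ Finset.Icc 2 k, w ^ (k - j) * |x| ^ j
        ≤ 2 ^ k * ∑ j ∈ Finset.Icc 2 k, (w ^ (k-1) / R + R ^ k) * |x| ^ j :=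
          mul_le_mul_of_nonneg_left h2 (by positivity)
      _ = 2 ^ k / R * (w ^ (k-1) * ∑ j ∈ Finset.Icc 2 k, |x| ^ j)
          + 2 ^ k * R ^ k * ∑ j ∈ Finset.Icc 2 k, |x| ^ j := by
          rw [Finset.mul_sum]
          calc ∑ i ∈ Finset.Icc 2 k, 2 ^ k * ((w ^ (k-1) / R + R ^ k) * |x| ^ i)
              = ∑ i ∈ Finset.Icc 2 k, ((2 ^ k / R * w ^ (k-1)) * |x| ^ i
                + (2 ^ k * R ^ k) * |x| ^ i) := by
                apply Finset.sum_congr rfl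
                intro i _
                field_simp
            _ = (2 ^ k / R * w ^ (k-1)) * ∑ i ∈ Finset.Icc 2 k, |x| ^ i
                + (2 ^ k * R ^ k) * ∑ i ∈ Finset.Icc 2 k, |x| ^ i := by
                rw [Finset.sum_add_distrib, ← Finset.mul_sum, ← Finset.mul_sum]
            _ = 2 ^ k / R * (w ^ (k-1) * ∑ i ∈ Finset.Icc 2 k, |x| ^ i)
                + 2 ^ k * R ^ k * ∑ i ∈ Finset.Icc 2 k, |x| ^ i := by ring
  linarith

/-- the sequence bootstrapping lemma -/
lemma seq_bound (u v : ℕ → ℝ) (c D : ℝ) (hc : 0 < c) (hD : 0 ≤ D) (hu0 : u 0 = 0)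
    (hupos : ∀ N, 0 ≤ u N) (hvpos : ∀ N, 0 ≤ v N) (hmono : Monotone v)
    (hrec : ∀ N, u (N+1) ≤ u N - c * v N + D) : ∀ N, v N ≤ 2 * D / c := by
  have hsum : ∀ N, u N + c * ∑ n ∈ range N, v n ≤ N * D := by
    intro N
    induction N with
    | zero => simp [hu0]
    | succ N ih =>
        have h1 := hrec N
        rw [Finset.sum_range_succ]
        push_cast
        nlinarith
  intro N
  have h1 : ((N:ℝ) + 1) * v N ≤ ∑ n ∈ range (2*N+1), v n := by
    have hsub : Finset.Ico N (2*N+1) ⊆ range (2*N+1) := by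
      intro x hx; simp only [Finset.mem_Ico] at hx; simp only [Finset.mem_range]; omega
    have h2 : ∑ n ∈ Finset.Ico N (2*N+1), v N ≤ ∑ n ∈ Finset.Ico N (2*N+1), v n :=
      Finset.sum_le_sum fun n hn => hmono (by simp only [Finset.mem_Ico] at hn; omega)
    have h3 : ∑ n ∈ Finset.Ico N (2*N+1), v n ≤ ∑ n ∈ range (2*N+1), v n :=
      Finset.sum_le_sum_of_subset_of_nonneg hsub (fun n _ _ => hvpos n)
    have h4 : ∑ n ∈ Finset.Ico N (2*N+1), (v N : ℝ) = ((N:ℝ)+1) * v N := by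
      rw [Finset.sum_const, Nat.card_Ico]
      have : 2*N+1 - N = N+1 := by omega
      rw [this]
      push_cast
      ring
    linarith
  have h5 := hsum (2*N+1)
  have h6 : c * (((N:ℝ)+1) * v N) ≤ (2*N+1) * D := by
    have := mul_le_mul_of_nonneg_left h1 hc.le
    have hu := hupos (2*N+1)
    push_cast at h5 ⊢
    nlinarith
  rw [le_div_iff₀ hc]
  nlinarith [hvpos N]


/-! ### partial maxima functional -/

/-- `phi ε N v` is `max_{0 ≤ n ≤ N} (v_0 + ... + v_{n-1} - n ε)`. -/
def phi (ε : ℝ) (N : ℕ) (v : Fin N → ℝ) : ℝ :=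
  (Finset.range (N+1)).sup' Finset.nonempty_range_add_one fun n =>
    (∑ j : Fin N, if (j:ℕ) < n then v j else 0) - n * ε

lemma measurable_phi (ε : ℝ) (N : ℕ) : Measurable (phi ε N) := by
  apply measurable_sup'
  intro n
  apply Measurable.sub _ measurable_const
  apply Finset.measurable_sum
  intro j _
  by_cases h : (j:ℕ) < n
  · simpa [h] using measurable_pi_apply j
  · simpa [h] using measurable_const

lemma phi_term_zero (ε : ℝ) (N : ℕ) (v : Fin N → ℝ) :
    (∑ j : Fin N, if (j:ℕ) < 0 then v j else 0) - (0:ℕ) * ε = 0 := by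
  simp

lemma phi_nonneg (ε : ℝ) (N : ℕ) (v : Fin N → ℝ) : 0 ≤ phi ε N v := by
  have h0 : (0:ℕ) ∈ Finset.range (N+1) := by simp
  have := Finset.le_sup' (f := fun n : ℕ =>
    (∑ j : Fin N, if (j:ℕ) < n then v j else 0) - n * ε) h0
  rw [phi_term_zero] at this
  exact this

lemma sum_fin_ite (u : ℕ → ℝ) {m N : ℕ} (h : m ≤ N) :
    (∑ j : Fin N, if (j:ℕ) < m then u j else 0) = ∑ j ∈ Finset.range m, u j := by
  rw [Fin.sum_univ_eq_sum_range (fun j => if j < m then u j else 0) N]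
  rw [← Finset.sum_subset (Finset.range_subset_range.2 h)
    (fun x _ hx => by simp only [Finset.mem_range, not_lt] at hx; simp [Nat.not_lt.2 hx])]
  apply Finset.sum_congr rfl
  intro j hj
  simp only [Finset.mem_range] at hj
  simp [hj]

lemma phi_le_sum_abs {ε : ℝ} (hε : 0 ≤ ε) (N : ℕ) (v : Fin N → ℝ) :
    phi ε N v ≤ ∑ j : Fin N, |v j| := by
  apply Finset.sup'_le
  intro n hn
  have h1 : (∑ j : Fin N, if (j:ℕ) < n then v j else 0) ≤ ∑ j : Fin N, |v j| := by
    apply Finset.sum_le_sum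
    intro j _
    by_cases h : (j:ℕ) < n
    · simp only [h, if_true]; exact le_abs_self _
    · simp only [h, if_false]; exact abs_nonneg _
  have h2 : (0:ℝ) ≤ n * ε := by positivity
  linarith

lemma phi_mono_N (ε : ℝ) {N : ℕ} (v : Fin (N+1) → ℝ) :
    phi ε N (fun j => v j.castSucc) ≤ phi ε (N+1) v := by
  apply Finset.sup'_le
  intro n hn
  simp only [Finset.mem_range] at hn
  have hterm : (∑ j : Fin N, if (j:ℕ) < n then v j.castSucc else 0)
      = ∑ j : Fin (N+1), if (j:ℕ) < n then v j else 0 := by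
    rw [Fin.sum_univ_castSucc (f := fun j : Fin (N+1) => if (j:ℕ) < n then v j else 0)]
    simp only [Fin.coe_castSucc, Fin.val_last]
    have : ¬ (N < n) := by omega
    simp [this]
  rw [hterm]
  exact Finset.le_sup' (f := fun n : ℕ =>
    (∑ j : Fin (N+1), if (j:ℕ) < n then v j else 0) - n * ε) (Finset.mem_range.2 (by omega))

lemma phi_succ_le (ε : ℝ) {N : ℕ} (v : Fin (N+1) → ℝ) :
    phi ε (N+1) v ≤ max 0 ((v 0 - ε) + phi ε N (fun j => v j.succ)) := by
  apply Finset.sup'_le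
  intro n hn
  simp only [Finset.mem_range] at hn
  match n with
  | 0 =>
      rw [phi_term_zero]
      exact le_max_left _ _
  | (m+1) =>
      have hm : m ∈ Finset.range (N+1) := by simp only [Finset.mem_range]; omega
      have hsum : (∑ j : Fin (N+1), if (j:ℕ) < m+1 then v j else 0)
          = v 0 + ∑ j : Fin N, if (j:ℕ) < m then v j.succ else 0 := by
        rw [Fin.sum_univ_succ (f := fun j : Fin (N+1) => if (j:ℕ) < m+1 then v j else 0)]
        simp only [Fin.val_zero, Fin.val_succ]
        congr 1
        · simp
      have hle : (∑ j : Fin N, if (j:ℕ) < m then v j.succ else 0) - m * ε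
          ≤ phi ε N (fun j => v j.succ) :=
        Finset.le_sup' (f := fun n : ℕ =>
          (∑ j : Fin N, if (j:ℕ) < n then v j.succ else 0) - n * ε) hm
      have : (∑ j : Fin (N+1), if (j:ℕ) < m+1 then v j else 0) - (↑(m+1)) * ε
          = (v 0 - ε) + ((∑ j : Fin N, if (j:ℕ) < m then v j.succ else 0) - m * ε) := by
        rw [hsum]
        push_cast
        ring
      rw [this]
      exact le_trans (by linarith) (le_max_right _ _)

/-! ### residue class counting -/

lemma cnt_enum (L : ℕ) (hL : 0 < L) (r : ℕ) (hr : r < L) (n : ℕ) :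
    Finset.filter (fun i => i % L = r) (Finset.range n)
      = (Finset.range (n / L + if r < n % L then 1 else 0)).image (fun j => r + L * j) := by
  ext i
  simp only [Finset.mem_filter, Finset.mem_range, Finset.mem_image]
  constructor
  · rintro ⟨hin, hmod⟩
    refine ⟨i / L, ?_, ?_⟩
    · have h1 := Nat.div_add_mod i L
      have h2 := Nat.div_add_mod n L
      have h3 : n % L < L := Nat.mod_lt _ hL
      have hqle : i / L ≤ n / L := Nat.div_le_div_right hin.le
      rw [hmod] at h1
      rcases lt_or_ge r (n % L) with h | h
      · simp only [h, if_true]; omega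
      · simp only [not_lt.2 h, if_false]
        rcases lt_or_eq_of_le hqle with h' | h'
        · exact h'
        · exfalso; rw [h'] at h1; omega
    · have h1 := Nat.div_add_mod i L
      rw [hmod] at h1
      omega
  · rintro ⟨j, hj, rfl⟩
    constructor
    · have h2 := Nat.div_add_mod n L
      rcases lt_or_ge r (n % L) with h | h
      · simp only [h, if_true] at hj
        have : L * j ≤ L * (n / L) := Nat.mul_le_mul_left L (by omega)
        omega
      · simp only [not_lt.2 h, if_false] at hj
        have : L * (j+1) ≤ L * (n / L) := Nat.mul_le_mul_left L (by omega)
        have hLj : L * (j+1) = L * j + L := by ring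
        omega
    · simp [Nat.add_mul_mod_self_left, Nat.mod_eq_of_lt hr]

lemma cnt_le (L : ℕ) (hL : 0 < L) (n : ℕ) (r : ℕ) :
    n / L + (if r < n % L then 1 else 0) ≤ n := by
  have h2 := Nat.div_add_mod n L
  have : n / L ≤ L * (n / L) := Nat.le_mul_of_pos_left _ hL
  split <;> omega

lemma cnt_sum (L : ℕ) (hL : 0 < L) (n : ℕ) :
    ∑ r ∈ Finset.range L, (n / L + if r < n % L then 1 else 0) = n := by
  rw [Finset.sum_add_distrib, Finset.sum_const, Finset.card_range, smul_eq_mul]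
  have h1 : ∑ r ∈ Finset.range L, (if r < n % L then 1 else 0) = n % L := by
    rw [Finset.sum_boole]
    have : Finset.filter (fun r => r < n % L) (Finset.range L) = Finset.range (n % L) := by
      ext x
      simp only [Finset.mem_filter, Finset.mem_range]
      have := Nat.mod_lt n hL
      omega
    rw [this, Finset.card_range, Nat.cast_id]
  rw [h1]
  have := Nat.div_add_mod n L
  omega

lemma sum_decomp (L : ℕ) (hL : 0 < L) (n : ℕ) (a : ℕ → ℝ) :
    ∑ i ∈ Finset.range n, a i
      = ∑ r ∈ Finset.range L, ∑ j ∈ Finset.range (n / L + if r < n % L then 1 else 0),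
          a (r + L * j) := by
  rw [← Finset.sum_fiberwise_of_maps_to (g := fun i => i % L) (t := Finset.range L)
    (fun i _ => Finset.mem_range.2 (Nat.mod_lt _ hL)) a]
  apply Finset.sum_congr rfl
  intro r hr
  simp only [Finset.mem_range] at hr
  have hinj : ∀ x ∈ Finset.range (n / L + if r < n % L then 1 else 0),
      ∀ y ∈ Finset.range (n / L + if r < n % L then 1 else 0),
      r + L * x = r + L * y → x = y := by
    intro x _ y _ hxy
    exact Nat.eq_of_mul_eq_mul_left hL (by omega)
  rw [cnt_enum L hL r hr n, Finset.sum_image hinj]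


/-! ### probabilistic layer -/

variable {Ω : Type*} [MeasurableSpace Ω]

/-- A sequence of random variables which are copies of `Z` and `l`-dependent. -/
def Valid (P : Measure Ω) (Z : Ω → ℝ) (l : ℕ) (Y : ℕ → Ω → ℝ) : Prop :=
  (∀ i, Measurable (Y i)) ∧ (∀ i, IdentDistrib (Y i) Z P P) ∧
    ∀ n : ℕ, IndepFun (fun ω => fun i : Fin n => Y i ω)
      (fun ω => fun j : {i : ℕ // n + l ≤ i} => Y j.1 ω) P

/-- the subsequence of stride `l+1` as a finite vector -/
def vec (l : ℕ) (Y : ℕ → Ω → ℝ) (N : ℕ) (ω : Ω) : Fin N → ℝ :=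
  fun j => Y ((l+1) * (j:ℕ)) ω

/-- shift of a sequence -/
def shf (s : ℕ) (Y : ℕ → Ω → ℝ) : ℕ → Ω → ℝ := fun i => Y (s + i)

lemma measurable_vec {l : ℕ} {Y : ℕ → Ω → ℝ} (hY : ∀ i, Measurable (Y i)) (N : ℕ) :
    Measurable (fun ω => vec l Y N ω) :=
  measurable_pi_lambda _ fun j => hY _

lemma valid_shf {P : Measure Ω} {Z : Ω → ℝ} {l : ℕ} {Y : ℕ → Ω → ℝ}
    (hY : Valid P Z l Y) (s : ℕ) : Valid P Z l (shf s Y) := by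
  refine ⟨fun i => hY.1 _, fun i => hY.2.1 _, fun n => ?_⟩
  have base := hY.2.2 (n + s)
  have hgl : Measurable (fun f : Fin (n+s) → ℝ => fun i : Fin n =>
      f ⟨s + i.1, by have := i.isLt; omega⟩) :=
    measurable_pi_lambda _ fun i => measurable_pi_apply _
  have hgr : Measurable (fun f : {i : ℕ // (n+s) + l ≤ i} → ℝ =>
      fun j : {i : ℕ // n + l ≤ i} => f ⟨s + j.1, by have := j.2; omega⟩) :=
    measurable_pi_lambda _ fun j => measurable_pi_apply _
  exact base.comp hgl hgr

lemma indep_head {P : Measure Ω} {Z : Ω → ℝ} {l : ℕ} {Y : ℕ → Ω → ℝ}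
    (hY : Valid P Z l Y) (N : ℕ) :
    IndepFun (Y 0) (fun ω => vec l (shf (l+1) Y) N ω) P := by
  have base := hY.2.2 1
  have hgl : Measurable (fun f : Fin 1 → ℝ => f 0) := measurable_pi_apply _
  have hgr : Measurable (fun f : {i : ℕ // 1 + l ≤ i} → ℝ =>
      fun j : Fin N => f ⟨(l+1) + (l+1) * (j:ℕ), by omega⟩) :=
    measurable_pi_lambda _ fun j => measurable_pi_apply _
  have h := base.comp hgl hgr
  have e1 : ((fun f : Fin 1 → ℝ => f 0) ∘ (fun ω => fun i : Fin 1 => Y (i:ℕ) ω)) = Y 0 := by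
    funext ω; simp
  rw [e1] at h
  exact h

/-- recursive construction of the law of the vector -/
def nuMeas (μ : Measure ℝ) : (N : ℕ) → Measure (Fin N → ℝ)
  | 0 => Measure.dirac (fun _ => 0)
  | (N+1) => Measure.map (fun p : ℝ × (Fin N → ℝ) => (Fin.cons p.1 p.2 : Fin (N+1) → ℝ))
      (μ.prod (nuMeas μ N))

lemma measurable_cons {N : ℕ} :
    Measurable (fun p : ℝ × (Fin N → ℝ) => (Fin.cons p.1 p.2 : Fin (N+1) → ℝ)) := by
  apply measurable_pi_lambda
  intro j
  refine Fin.cases ?_ (fun i => ?_) j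
  · simpa [Fin.cons_zero] using measurable_fst
  · simpa [Fin.cons_succ] using (measurable_snd.eval :
      Measurable fun c : ℝ × (Fin N → ℝ) => c.2 i)

lemma nuMeas_prob (μ : Measure ℝ) [IsProbabilityMeasure μ] (N : ℕ) :
    IsProbabilityMeasure (nuMeas μ N) := by
  induction N with
  | zero =>
      rw [nuMeas]
      infer_instance
  | succ N ih =>
      rw [nuMeas]
      haveI := ih
      exact Measure.isProbabilityMeasure_map measurable_cons.aemeasurable

lemma law_vec (P : Measure Ω) [IsProbabilityMeasure P] (Z : Ω → ℝ) (hZm : Measurable Z)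
    (l : ℕ) :
    ∀ (N : ℕ) (Y : ℕ → Ω → ℝ), Valid P Z l Y →
      Measure.map (fun ω => vec l Y N ω) P = nuMeas (P.map Z) N := by
  intro N
  induction N with
  | zero =>
      intro Y hY
      have he : (fun ω => vec l Y 0 ω) = fun _ => (fun _ : Fin 0 => (0:ℝ)) := by
        funext ω; funext j; exact j.elim0
      rw [he, Measure.map_const, nuMeas]
      simp
  | succ N ih =>
      intro Y hY
      have hmv : Measurable (fun ω => vec l (shf (l+1) Y) N ω) :=
        measurable_vec (fun i => hY.1 _) N
      have hpair : (fun ω => vec l Y (N+1) ω)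
          = (fun p : ℝ × (Fin N → ℝ) => (Fin.cons p.1 p.2 : Fin (N+1) → ℝ))
            ∘ (fun ω => (Y 0 ω, vec l (shf (l+1) Y) N ω)) := by
        funext ω
        show vec l Y (N+1) ω = Fin.cons (Y 0 ω) (vec l (shf (l+1) Y) N ω)
        funext j
        refine Fin.cases ?_ (fun i => ?_) j
        · simp [vec, Fin.cons_zero]
        · simp only [vec, Fin.cons_succ, shf, Fin.val_succ]
          congr 1
          ring
      have hip : IndepFun (Y 0) (fun ω => vec l (shf (l+1) Y) N ω) P := indep_head hY N
      rw [hpair, ← Measure.map_map measurable_cons ((hY.1 0).prodMk hmv),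
        (indepFun_iff_map_prod_eq_prod_map_map (hY.1 0).aemeasurable hmv.aemeasurable).mp hip,
        (hY.2.1 0).map_eq, ih _ (valid_shf hY (l+1))]
      rfl

/-- partial maxima statistic -/
def TT (ε : ℝ) (l : ℕ) (Y : ℕ → Ω → ℝ) (N : ℕ) (ω : Ω) : ℝ := phi ε N (vec l Y N ω)

lemma measurable_TT (ε : ℝ) (l : ℕ) {Y : ℕ → Ω → ℝ} (hY : ∀ i, Measurable (Y i)) (N : ℕ) :
    Measurable (TT ε l Y N) :=
  (measurable_phi ε N).comp (measurable_vec hY N)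

/-- moments of the partial maxima under the canonical law -/
def mom (μ : Measure ℝ) (ε : ℝ) (j N : ℕ) : ℝ := ∫ v, (phi ε N v) ^ j ∂(nuMeas μ N)

lemma mom_eq {P : Measure Ω} [IsProbabilityMeasure P] {Z : Ω → ℝ} (hZm : Measurable Z)
    {l : ℕ} {Y : ℕ → Ω → ℝ} (hY : Valid P Z l Y) (ε : ℝ) (j N : ℕ) :
    ∫ ω, (TT ε l Y N ω) ^ j ∂P = mom (P.map Z) ε j N := by
  rw [mom, ← law_vec P Z hZm l N Y hY,
    integral_map (measurable_vec hY.1 N).aemeasurable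
      (((measurable_phi ε N).pow_const j).aestronglyMeasurable)]
  rfl

/-! ### integrability -/

lemma abs_pow_le_aux {k j : ℕ} (hj : j ≤ k) (c x : ℝ) :
    |x - c| ^ j ≤ (1+|c|)^k * 2^k * (1 + |x|^k) := by
  have h1 : |x - c| ≤ (1+|c|) * (1+|x|) := by
    have h := abs_sub x c
    have := abs_nonneg x
    have := abs_nonneg c
    nlinarith
  have hb : (1:ℝ) ≤ (1+|c|) * (1+|x|) := by nlinarith [abs_nonneg x, abs_nonneg c]
  have h2 : (1+|x|)^k ≤ 2^k * (1 + |x|^k) := by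
    have hm : 1 + |x| ≤ 2 * max 1 |x| := by
      rcases le_total 1 |x| with h | h
      · rw [max_eq_right h]; linarith
      · rw [max_eq_left h]; linarith
    have hmk : (max 1 |x|)^k ≤ 1 + |x|^k := by
      rcases le_total 1 |x| with h | h
      · rw [max_eq_right h]
        have : (0:ℝ) ≤ 1 := zero_le_one
        linarith [pow_nonneg (abs_nonneg x) k]
      · rw [max_eq_left h, one_pow]
        linarith [pow_nonneg (abs_nonneg x) k]
    calc (1+|x|)^k ≤ (2 * max 1 |x|)^k :=
          pow_le_pow_left₀ (by positivity) hm k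
      _ = 2^k * (max 1 |x|)^k := mul_pow _ _ _
      _ ≤ 2^k * (1 + |x|^k) := mul_le_mul_of_nonneg_left hmk (by positivity)
  calc |x - c| ^ j ≤ ((1+|c|) * (1+|x|))^j := pow_le_pow_left₀ (abs_nonneg _) h1 j
    _ ≤ ((1+|c|) * (1+|x|))^k := pow_le_pow_right₀ hb hj
    _ = (1+|c|)^k * (1+|x|)^k := mul_pow _ _ _
    _ ≤ (1+|c|)^k * (2^k * (1 + |x|^k)) :=
        mul_le_mul_of_nonneg_left h2 (by positivity)
    _ = (1+|c|)^k * 2^k * (1 + |x|^k) := by ring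

lemma int_abs_sub_pow {P : Measure Ω} [IsProbabilityMeasure P] {Z : Ω → ℝ} {k : ℕ}
    (hZm : Measurable Z) (hZk : Integrable (fun ω => |Z ω| ^ k) P)
    {j : ℕ} (hj : j ≤ k) (c : ℝ) :
    Integrable (fun ω => |Z ω - c| ^ j) P := by
  apply Integrable.mono' (g := fun ω => (1+|c|)^k * 2^k * (1 + |Z ω|^k))
    (((integrable_const (1:ℝ)).add hZk).const_mul _)
    (((hZm.sub measurable_const).abs.pow_const j).aestronglyMeasurable)
  filter_upwards with ω
  rw [Real.norm_eq_abs, abs_of_nonneg (pow_nonneg (abs_nonneg _) _)]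
  exact abs_pow_le_aux hj c (Z ω)

lemma int_Y {P : Measure Ω} [IsProbabilityMeasure P] {Z : Ω → ℝ} {l : ℕ} {Y : ℕ → Ω → ℝ}
    {k : ℕ} (hZm : Measurable Z) (hZk : Integrable (fun ω => |Z ω| ^ k) P)
    (hY : Valid P Z l Y) (i : ℕ) {j : ℕ} (hj : j ≤ k) (c : ℝ) :
    Integrable (fun ω => |Y i ω - c| ^ j) P := by
  have hid : IdentDistrib (fun ω => |Y i ω - c| ^ j) (fun ω => |Z ω - c| ^ j) P P :=
    (hY.2.1 i).comp ((measurable_id.sub measurable_const).abs.pow_const j)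
  exact hid.integrable_iff.mpr (int_abs_sub_pow hZm hZk hj c)

lemma int_TT {P : Measure Ω} [IsProbabilityMeasure P] {Z : Ω → ℝ} {l : ℕ} {Y : ℕ → Ω → ℝ}
    {k : ℕ} (hZm : Measurable Z) (hZk : Integrable (fun ω => |Z ω| ^ k) P)
    (hY : Valid P Z l Y) {ε : ℝ} (hε : 0 ≤ ε) {j : ℕ} (hj : j ≤ k) (N : ℕ) :
    Integrable (fun ω => (TT ε l Y N ω) ^ j) P := by
  rcases Nat.eq_zero_or_pos j with rfl | hj0
  · simpa using integrable_const (1:ℝ)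
  obtain ⟨n, rfl⟩ : ∃ n, j = n + 1 := ⟨j - 1, by omega⟩
  apply Integrable.mono'
    (g := fun ω => (N:ℝ)^n * ∑ i : Fin N, |Y ((l+1) * (i:ℕ)) ω - 0| ^ (n+1))
  · exact (integrable_finset_sum _ fun i _ => int_Y hZm hZk hY _ hj 0).const_mul _
  · exact ((measurable_TT ε l hY.1 N).pow_const _).aestronglyMeasurable
  · filter_upwards with ω
    have hTnn : (0:ℝ) ≤ TT ε l Y N ω := phi_nonneg _ _ _
    rw [Real.norm_eq_abs, abs_of_nonneg (pow_nonneg hTnn _)]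
    have h1 : TT ε l Y N ω ≤ ∑ i : Fin N, |vec l Y N ω i| := phi_le_sum_abs hε N _
    have h2 : (TT ε l Y N ω) ^ (n+1) ≤ (∑ i : Fin N, |vec l Y N ω i|) ^ (n+1) :=
      pow_le_pow_left₀ (phi_nonneg _ _ _) h1 _
    have h3 : (∑ i : Fin N, |vec l Y N ω i|) ^ (n+1)
        ≤ (Finset.univ.card : ℝ)^n * ∑ i : Fin N, |vec l Y N ω i| ^ (n+1) :=
      pow_sum_le_card_mul_sum_pow (fun i _ => abs_nonneg _) n
    have h4 : ((Finset.univ : Finset (Fin N)).card : ℝ) = (N:ℝ) := by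
      simp
    rw [h4] at h3
    have h5 : ∑ i : Fin N, |vec l Y N ω i| ^ (n+1)
        = ∑ i : Fin N, |Y ((l+1) * (i:ℕ)) ω - 0| ^ (n+1) := by
      apply Finset.sum_congr rfl
      intro i _
      rw [sub_zero]
      rfl
    rw [h5] at h3
    linarith


/-! ### Lindley recursion -/

lemma TT_succ_le (ε : ℝ) (l : ℕ) (Y : ℕ → Ω → ℝ) (N : ℕ) (ω : Ω) :
    TT ε l Y (N+1) ω ≤ max 0 ((Y 0 ω - ε) + TT ε l (shf (l+1) Y) N ω) := by
  have h := phi_succ_le ε (v := vec l Y (N+1) ω)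
  have e0 : vec l Y (N+1) ω 0 = Y 0 ω := by simp [vec]
  have e1 : (fun j : Fin N => vec l Y (N+1) ω j.succ) = vec l (shf (l+1) Y) N ω := by
    funext j
    simp only [vec, shf, Fin.val_succ]
    congr 1
    ring
  rw [e0, e1] at h
  exact h

lemma TT_mono (ε : ℝ) (l : ℕ) (Y : ℕ → Ω → ℝ) (N : ℕ) (ω : Ω) :
    TT ε l Y N ω ≤ TT ε l Y (N+1) ω := by
  have h := phi_mono_N ε (v := vec l Y (N+1) ω)
  have e : (fun j : Fin N => vec l Y (N+1) ω j.castSucc) = vec l Y N ω := by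
    funext j
    simp [vec, Fin.coe_castSucc]
  rw [e] at h
  exact h

lemma TT_nonneg (ε : ℝ) (l : ℕ) (Y : ℕ → Ω → ℝ) (N : ℕ) (ω : Ω) :
    0 ≤ TT ε l Y N ω := phi_nonneg _ _ _

/-- the constant `A = ∑_{j=2}^k E|Z-ε|^j` -/
def Aconst (P : Measure Ω) (Z : Ω → ℝ) (ε : ℝ) (k : ℕ) : ℝ :=
  ∑ j ∈ Finset.Icc 2 k, ∫ ω, |Z ω - ε| ^ j ∂P

lemma mom_nonneg (μ : Measure ℝ) (ε : ℝ) (j N : ℕ) : 0 ≤ mom μ ε j N :=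
  integral_nonneg fun v => pow_nonneg (phi_nonneg _ _ _) j

lemma phi_zero (ε : ℝ) (v : Fin 0 → ℝ) : phi ε 0 v = 0 := by
  apply le_antisymm
  · apply Finset.sup'_le
    intro n hn
    simp only [Finset.mem_range] at hn
    interval_cases n
    simp
  · exact phi_nonneg _ _ _

lemma mom_zero (μ : Measure ℝ) [IsProbabilityMeasure μ] (ε : ℝ) {j : ℕ} (hj : j ≠ 0) :
    mom μ ε j 0 = 0 := by
  rw [mom]
  have : ∀ v : Fin 0 → ℝ, (phi ε 0 v) ^ j = 0 := by
    intro v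
    rw [phi_zero, zero_pow hj]
  simp only [this]
  simp

/-- The fundamental moment recursion. -/
lemma mom_rec {P : Measure Ω} [IsProbabilityMeasure P] {Z : Ω → ℝ} {l : ℕ} {Y : ℕ → Ω → ℝ}
    {k : ℕ} (hk : 2 ≤ k) (hZm : Measurable Z) (hZk : Integrable (fun ω => |Z ω| ^ k) P)
    (hZ0 : ∫ ω, Z ω ∂P = 0) (hY : Valid P Z l Y) {ε R : ℝ} (hε : 0 < ε) (hR : 1 ≤ R)
    (N : ℕ) :
    mom (P.map Z) ε k (N+1) ≤ mom (P.map Z) ε k N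
      + (k:ℝ) * (mom (P.map Z) ε (k-1) N * (-ε))
      + 2^k / R * (mom (P.map Z) ε (k-1) N * Aconst P Z ε k)
      + 2^k * R^k * Aconst P Z ε k := by
  have hY' : Valid P Z l (shf (l+1) Y) := valid_shf hY (l+1)
  set W : Ω → ℝ := TT ε l (shf (l+1) Y) N with hW
  set X : Ω → ℝ := fun ω => Y 0 ω - ε with hX
  set Bx : Ω → ℝ := fun ω => ∑ j ∈ Finset.Icc 2 k, |Y 0 ω - ε| ^ j with hBx
  have hXeq : ∀ ω, X ω = Y 0 ω - ε := fun ω => rfl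
  have hBxeq : ∀ ω, Bx ω = ∑ j ∈ Finset.Icc 2 k, |X ω| ^ j := fun ω => rfl
  -- integrability facts
  have intZ : Integrable Z P := by
    apply Integrable.mono' (g := fun ω => 1 + |Z ω| ^ k)
      ((integrable_const (1:ℝ)).add hZk) hZm.aestronglyMeasurable
    filter_upwards with ω
    rw [Real.norm_eq_abs]
    rcases le_total (|Z ω|) 1 with h | h
    · linarith [pow_nonneg (abs_nonneg (Z ω)) k]
    · have h2 : |Z ω| ^ 1 ≤ |Z ω| ^ k := pow_le_pow_right₀ h (by omega)
      rw [pow_one] at h2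
      linarith
  have intY0 : Integrable (Y 0) P := (hY.2.1 0).integrable_iff.mpr intZ
  have intX : Integrable X P := intY0.sub (integrable_const ε)
  have intBx : Integrable Bx P := by
    apply integrable_finset_sum
    intro j hj
    exact int_Y hZm hZk hY 0 (Finset.mem_Icc.1 hj).2 ε
  have intL : Integrable (fun ω => (TT ε l Y (N+1) ω) ^ k) P :=
    int_TT hZm hZk hY hε.le (le_refl k) (N+1)
  have intWk : Integrable (fun ω => W ω ^ k) P := int_TT hZm hZk hY' hε.le (le_refl k) N
  have intWk1 : Integrable (fun ω => W ω ^ (k-1)) P :=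
    int_TT hZm hZk hY' hε.le (by omega) N
  -- independence facts
  have hIbase := indep_head hY N
  have hmphi : Measurable (fun v : Fin N → ℝ => (phi ε N v) ^ (k-1)) :=
    (measurable_phi ε N).pow_const _
  have hmX : Measurable (fun x : ℝ => x - ε) := measurable_id.sub measurable_const
  have hmB : Measurable (fun x : ℝ => ∑ j ∈ Finset.Icc 2 k, |x - ε| ^ j) :=
    Finset.measurable_sum _ fun j _ => ((measurable_id.sub measurable_const).abs.pow_const j)
  have hI1 : IndepFun (fun ω => W ω ^ (k-1)) X P := hIbase.symm.comp hmphi hmX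
  have hI2 : IndepFun (fun ω => W ω ^ (k-1)) Bx P := hIbase.symm.comp hmphi hmB
  have intWX : Integrable (fun ω => W ω ^ (k-1) * X ω) P := hI1.integrable_mul intWk1 intX
  have intWB : Integrable (fun ω => W ω ^ (k-1) * Bx ω) P := hI2.integrable_mul intWk1 intBx
  -- pointwise inequality
  have hpt : ∀ ω, (TT ε l Y (N+1) ω) ^ k
      ≤ W ω ^ k + (k:ℝ) * (W ω ^ (k-1) * X ω)
        + 2^k / R * (W ω ^ (k-1) * Bx ω) + 2^k * R^k * Bx ω := by
    intro ω
    have h0 := TT_succ_le ε l Y N ω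
    rw [add_comm (Y 0 ω - ε)] at h0
    have h1 : (TT ε l Y (N+1) ω) ^ k ≤ (max 0 (W ω + X ω)) ^ k := by
      apply pow_le_pow_left₀ (TT_nonneg _ _ _ _ _)
      rw [hXeq]
      exact h0
    have h2 := key_pow hk (w := W ω) (x := X ω) (R := R) (TT_nonneg _ _ _ _ _) hR
    rw [hBxeq ω]
    nlinarith [h1, h2]
  -- integral inequality
  have intR : Integrable (fun ω => W ω ^ k + (k:ℝ) * (W ω ^ (k-1) * X ω)
      + 2^k / R * (W ω ^ (k-1) * Bx ω) + 2^k * R^k * Bx ω) P :=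
    ((intWk.add (intWX.const_mul _)).add (intWB.const_mul _)).add (intBx.const_mul _)
  have hstep : ∫ ω, (TT ε l Y (N+1) ω) ^ k ∂P
      ≤ ∫ ω, (W ω ^ k + (k:ℝ) * (W ω ^ (k-1) * X ω)
        + 2^k / R * (W ω ^ (k-1) * Bx ω) + 2^k * R^k * Bx ω) ∂P :=
    integral_mono intL intR hpt
  -- expand the right-hand side
  have hexp : ∫ ω, (W ω ^ k + (k:ℝ) * (W ω ^ (k-1) * X ω)
      + 2^k / R * (W ω ^ (k-1) * Bx ω) + 2^k * R^k * Bx ω) ∂P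
      = (∫ ω, W ω ^ k ∂P) + (k:ℝ) * (∫ ω, W ω ^ (k-1) * X ω ∂P)
        + 2^k / R * (∫ ω, W ω ^ (k-1) * Bx ω ∂P) + 2^k * R^k * (∫ ω, Bx ω ∂P) := by
    have i6 : Integrable (fun ω => (k:ℝ) * (W ω ^ (k-1) * X ω)) P := intWX.const_mul _
    have i5 : Integrable (fun ω => 2^k / R * (W ω ^ (k-1) * Bx ω)) P := intWB.const_mul _
    have i4 : Integrable (fun ω => 2^k * R^k * Bx ω) P := intBx.const_mul _
    have i2 : Integrable (fun ω => W ω ^ k + (k:ℝ) * (W ω ^ (k-1) * X ω)) P := intWk.add i6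
    have i3 : Integrable (fun ω => W ω ^ k + (k:ℝ) * (W ω ^ (k-1) * X ω)
        + 2^k / R * (W ω ^ (k-1) * Bx ω)) P := i2.add i5
    rw [integral_add i3 i4, integral_add i2 i5, integral_add intWk i6,
      integral_const_mul, integral_const_mul, integral_const_mul]
  -- evaluate each piece
  have hWk : ∫ ω, W ω ^ k ∂P = mom (P.map Z) ε k N := mom_eq hZm hY' ε k N
  have hWk1 : ∫ ω, W ω ^ (k-1) ∂P = mom (P.map Z) ε (k-1) N := mom_eq hZm hY' ε (k-1) N
  have hEX : ∫ ω, X ω ∂P = -ε := by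
    rw [hX]
    rw [integral_sub intY0 (integrable_const ε)]
    rw [(hY.2.1 0).integral_eq, hZ0, integral_const]
    simp
  have hEB : ∫ ω, Bx ω ∂P = Aconst P Z ε k := by
    rw [hBx, Aconst]
    rw [integral_finset_sum _ (fun j hj => int_Y hZm hZk hY 0 (Finset.mem_Icc.1 hj).2 ε)]
    apply Finset.sum_congr rfl
    intro j _
    exact ((hY.2.1 0).comp ((measurable_id.sub measurable_const).abs.pow_const j)).integral_eq
  have haesW : AEStronglyMeasurable (fun ω => W ω ^ (k-1)) P :=
    ((measurable_TT ε l (fun i => hY.1 _) N).pow_const _).aestronglyMeasurable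
  have haesX : AEStronglyMeasurable X P :=
    ((hY.1 0).sub measurable_const).aestronglyMeasurable
  have haesB : AEStronglyMeasurable Bx P :=
    (Finset.measurable_sum _ fun j _ =>
      (((hY.1 0).sub measurable_const).abs.pow_const j)).aestronglyMeasurable
  have hmul1 : ∫ ω, W ω ^ (k-1) * X ω ∂P
      = (∫ ω, W ω ^ (k-1) ∂P) * (∫ ω, X ω ∂P) := hI1.integral_fun_mul_eq_mul_integral haesW haesX
  have hmul2 : ∫ ω, W ω ^ (k-1) * Bx ω ∂P
      = (∫ ω, W ω ^ (k-1) ∂P) * (∫ ω, Bx ω ∂P) := hI2.integral_fun_mul_eq_mul_integral haesW haesB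
  have hfinal := hstep
  rw [hexp, hmul1, hmul2, hWk, hWk1, hEX, hEB, mom_eq hZm hY ε k (N+1)] at hfinal
  linarith


lemma Aconst_nonneg (P : Measure Ω) (Z : Ω → ℝ) (ε : ℝ) (k : ℕ) : 0 ≤ Aconst P Z ε k :=
  Finset.sum_nonneg fun j _ => integral_nonneg fun ω => pow_nonneg (abs_nonneg _) _

/-- uniform bound on the `(k-1)`-th moments of the partial maxima -/
lemma mom_bound {P : Measure Ω} [IsProbabilityMeasure P] {Z : Ω → ℝ} {l : ℕ} {Y : ℕ → Ω → ℝ}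
    {k : ℕ} (hk : 2 ≤ k) (hZm : Measurable Z) (hZk : Integrable (fun ω => |Z ω| ^ k) P)
    (hZ0 : ∫ ω, Z ω ∂P = 0) (hY : Valid P Z l Y) {ε : ℝ} (hε : 0 < ε) :
    ∃ B : ℝ, 0 ≤ B ∧ ∀ N, mom (P.map Z) ε (k-1) N ≤ B := by
  haveI : IsProbabilityMeasure (P.map Z) := Measure.isProbabilityMeasure_map hZm.aemeasurable
  set A := Aconst P Z ε k with hA
  have hA0 : 0 ≤ A := Aconst_nonneg P Z ε k
  have hkε : (0:ℝ) < (k:ℝ) * ε := by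
    have : (0:ℝ) < (k:ℝ) := by exact_mod_cast (by omega : 0 < k)
    positivity
  set R : ℝ := max 1 (2^(k+1) * A / ((k:ℝ) * ε)) with hRdef
  have hR1 : 1 ≤ R := le_max_left _ _
  have hR0 : (0:ℝ) < R := lt_of_lt_of_le one_pos hR1
  have hRb : 2^k / R * A ≤ (k:ℝ) * ε / 2 := by
    have h1 : 2^(k+1) * A / ((k:ℝ) * ε) ≤ R := le_max_right _ _
    rw [div_le_iff₀ hkε] at h1
    rw [div_mul_eq_mul_div, div_le_iff₀ hR0]
    have h2 : (2:ℝ)^(k+1) = 2^k * 2 := pow_succ 2 k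
    nlinarith
  set c : ℝ := (k:ℝ) * ε / 2 with hc
  have hc0 : 0 < c := by positivity
  set D : ℝ := 2^k * R^k * A with hD
  have hD0 : 0 ≤ D := by positivity
  refine ⟨2 * D / c, by positivity, ?_⟩
  apply seq_bound (fun N => mom (P.map Z) ε k N) (fun N => mom (P.map Z) ε (k-1) N) c D hc0 hD0
  · exact mom_zero _ _ (by omega)
  · exact fun N => mom_nonneg _ _ _ _
  · exact fun N => mom_nonneg _ _ _ _
  · apply monotone_nat_of_le_succ
    intro N
    rw [← mom_eq hZm hY ε (k-1) N, ← mom_eq hZm hY ε (k-1) (N+1)]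
    apply integral_mono (int_TT hZm hZk hY hε.le (by omega) N)
      (int_TT hZm hZk hY hε.le (by omega) (N+1))
    intro ω
    exact pow_le_pow_left₀ (TT_nonneg _ _ _ _ _) (TT_mono ε l Y N ω) _
  · intro N
    have h1 := mom_rec hk hZm hZk hZ0 hY hε hR1 N
    have hv0 : 0 ≤ mom (P.map Z) ε (k-1) N := mom_nonneg _ _ _ _
    have h2 : 2^k / R * (mom (P.map Z) ε (k-1) N * A)
        ≤ mom (P.map Z) ε (k-1) N * ((k:ℝ) * ε / 2) := by
      have : 2^k / R * (mom (P.map Z) ε (k-1) N * A)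
          = mom (P.map Z) ε (k-1) N * (2^k / R * A) := by ring
      rw [this]
      exact mul_le_mul_of_nonneg_left hRb hv0
    have hkcast : (2:ℝ) ≤ (k:ℝ) := by exact_mod_cast hk
    nlinarith

end Stmt14Aux


open Stmt14Aux

/-- for an `l`-dependent sequence of copies of a centered random
variable `Z` with `E|Z|^k < ∞` (`k ≥ 2`), the maximum `M = sup_n (S_n − nε)` has a
finite `(k−1)`-th moment. -/
theorem stmt14 {Ω : Type*} [MeasurableSpace Ω] (P : Measure Ω) [IsProbabilityMeasure P]
    (k : ℕ) (hk : 2 ≤ k) (Z : Ω → ℝ) (hZm : Measurable Z)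
    (hZk : Integrable (fun ω => |Z ω| ^ k) P) (hZ0 : ∫ ω, Z ω ∂P = 0)
    (Zi : ℕ → Ω → ℝ) (hZim : ∀ i, Measurable (Zi i))
    (hcopy : ∀ i, IdentDistrib (Zi i) Z P P)
    (l : ℕ)
    (hldep : ∀ n : ℕ,
      IndepFun (fun ω => fun i : Fin n => Zi i ω)
        (fun ω => fun j : {i : ℕ // n + l ≤ i} => Zi j.1 ω) P)
    (ε : ℝ) (hε : 0 < ε) :
    Integrable
      (fun ω => (⨆ n : ℕ, ((∑ i ∈ Finset.range n, Zi i ω) - n * ε)) ^ (k - 1)) P := by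
  classical
  have hvalid : Valid P Z l Zi := ⟨hZim, hcopy, hldep⟩
  obtain ⟨B, hB0, hB⟩ := mom_bound hk hZm hZk hZ0 hvalid hε
  set f : ℕ → Ω → ℝ := fun n ω => (∑ i ∈ Finset.range n, Zi i ω) - n * ε with hf
  set G : ℕ → Ω → ℝ := fun N ω =>
    (Finset.range (N+1)).sup' Finset.nonempty_range_add_one fun n => f n ω with hG
  have hf0 : ∀ ω, f 0 ω = 0 := by intro ω; simp [hf]
  have hfm : ∀ n, Measurable (f n) := fun n =>
    (Finset.measurable_sum _ fun i _ => hZim i).sub measurable_const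
  have hGmeas : ∀ N, Measurable (G N) := fun N =>
    measurable_sup' _ _ _ (fun n => hfm n)
  have hfleG : ∀ n ω, f n ω ≤ G n ω := fun n ω =>
    Finset.le_sup' (f := fun m => f m ω) (Finset.mem_range.2 (by omega))
  have hGnn : ∀ N ω, 0 ≤ G N ω := by
    intro N ω
    have h := Finset.le_sup' (f := fun m => f m ω)
      (Finset.mem_range.2 (show 0 < N+1 by omega))
    rw [hf0 ω] at h
    exact h
  have hGmono : ∀ ω, Monotone fun N => G N ω := by
    intro ω
    apply monotone_nat_of_le_succ
    intro N
    apply Finset.sup'_le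
    intro n hn
    simp only [Finset.mem_range] at hn
    exact Finset.le_sup' (f := fun m => f m ω) (Finset.mem_range.2 (by omega))
  -- the residue-class decomposition bound
  have hGle : ∀ N ω, G N ω ≤ ∑ r ∈ Finset.range (l+1), TT ε l (shf r Zi) N ω := by
    intro N ω
    apply Finset.sup'_le
    intro n hn
    simp only [Finset.mem_range] at hn
    have hL0 : 0 < l + 1 := by omega
    have hdec := sum_decomp (l+1) hL0 n (fun i => Zi i ω)
    have hcnt := cnt_sum (l+1) hL0 n
    have hncast : (n:ℝ) * ε = ∑ r ∈ Finset.range (l+1),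
        (((n / (l+1) + if r < n % (l+1) then 1 else 0 : ℕ)) : ℝ) * ε := by
      rw [← Finset.sum_mul]
      congr 1
      rw [← Nat.cast_sum, hcnt]
    show f n ω ≤ _
    show (∑ i ∈ Finset.range n, Zi i ω) - (n:ℝ) * ε ≤ _
    rw [hdec, hncast, ← Finset.sum_sub_distrib]
    apply Finset.sum_le_sum
    intro r hr
    simp only [Finset.mem_range] at hr
    have hmN : n / (l+1) + (if r < n % (l+1) then 1 else 0) ≤ N :=
      le_trans (cnt_le (l+1) hL0 n r) (by omega)
    have heq : (∑ j : Fin N, if (j:ℕ) < (n / (l+1) + if r < n % (l+1) then 1 else 0) then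
        vec l (shf r Zi) N ω j else 0)
        = ∑ j ∈ Finset.range (n / (l+1) + if r < n % (l+1) then 1 else 0),
            Zi (r + (l+1)*j) ω :=
      sum_fin_ite (fun t => Zi (r + (l+1)*t) ω) hmN
    have hle := Finset.le_sup' (f := fun mm : ℕ =>
      (∑ j : Fin N, if (j:ℕ) < mm then vec l (shf r Zi) N ω j else 0) - mm * ε)
      (Finset.mem_range.2 (show (n / (l+1) + if r < n % (l+1) then 1 else 0) < N+1 by omega))
    rw [heq] at hle
    exact hle
  obtain ⟨k2, hk2⟩ : ∃ m, k - 1 = m + 1 := ⟨k - 2, by omega⟩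
  have hTTint : ∀ (r N : ℕ),
      Integrable (fun ω => (TT ε l (shf r Zi) N ω)^(k-1)) P :=
    fun r N => int_TT hZm hZk (valid_shf hvalid r) hε.le (by omega) N
  set Bfin : ℝ := ((l+1:ℕ):ℝ)^k2 * (((l+1:ℕ):ℝ) * B) with hBfin
  have hGpt : ∀ N ω, (G N ω)^(k-1) ≤ ((l+1:ℕ):ℝ)^k2 *
      ∑ r ∈ Finset.range (l+1), (TT ε l (shf r Zi) N ω)^(k-1) := by
    intro N ω
    have h1 : (G N ω)^(k-1)
        ≤ (∑ r ∈ Finset.range (l+1), TT ε l (shf r Zi) N ω)^(k-1) :=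
      pow_le_pow_left₀ (hGnn N ω) (hGle N ω) _
    have h2 := pow_sum_le_card_mul_sum_pow (s := Finset.range (l+1))
      (f := fun r => TT ε l (shf r Zi) N ω)
      (fun r _ => TT_nonneg _ _ _ _ _) k2
    rw [Finset.card_range] at h2
    rw [hk2] at h1 ⊢
    exact le_trans h1 h2
  have hGint : ∀ N, Integrable (fun ω => (G N ω)^(k-1)) P := by
    intro N
    apply Integrable.mono' (g := fun ω => ((l+1:ℕ):ℝ)^k2 *
        ∑ r ∈ Finset.range (l+1), (TT ε l (shf r Zi) N ω)^(k-1))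
      ((integrable_finset_sum _ fun r _ => hTTint r N).const_mul _)
      (((hGmeas N).pow_const _).aestronglyMeasurable)
    filter_upwards with ω
    rw [Real.norm_eq_abs, abs_of_nonneg (pow_nonneg (hGnn N ω) _)]
    exact hGpt N ω
  have hGB : ∀ N, ∫ ω, (G N ω)^(k-1) ∂P ≤ Bfin := by
    intro N
    have h1 := integral_mono (hGint N)
      ((integrable_finset_sum _ fun r _ => hTTint r N).const_mul _) (hGpt N)
    rw [integral_const_mul, integral_finset_sum _ (fun r _ => hTTint r N)] at h1
    have h2 : ∑ r ∈ Finset.range (l+1), ∫ ω, (TT ε l (shf r Zi) N ω)^(k-1) ∂P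
        ≤ ∑ _r ∈ Finset.range (l+1), B := by
      apply Finset.sum_le_sum
      intro r _
      rw [mom_eq hZm (valid_shf hvalid r) ε (k-1) N]
      exact hB N
    rw [Finset.sum_const, Finset.card_range, nsmul_eq_mul] at h2
    calc ∫ ω, (G N ω)^(k-1) ∂P
        ≤ ((l+1:ℕ):ℝ)^k2 * ∑ r ∈ Finset.range (l+1), ∫ ω, (TT ε l (shf r Zi) N ω)^(k-1) ∂P := h1
      _ ≤ ((l+1:ℕ):ℝ)^k2 * (((l+1:ℕ):ℝ) * B) :=
          mul_le_mul_of_nonneg_left h2 (by positivity)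
  -- monotone convergence
  have hmeasN : ∀ N : ℕ, Measurable fun ω => ENNReal.ofReal ((G N ω)^(k-1)) :=
    fun N => ((hGmeas N).pow_const _).ennreal_ofReal
  have hmonoN : Monotone fun N : ℕ => fun ω => ENNReal.ofReal ((G N ω)^(k-1)) := by
    intro N M hNM ω
    exact ENNReal.ofReal_le_ofReal (pow_le_pow_left₀ (hGnn N ω) (hGmono ω hNM) _)
  have hlint : ∫⁻ ω, (⨆ N, ENNReal.ofReal ((G N ω)^(k-1))) ∂P ≤ ENNReal.ofReal Bfin := by
    rw [lintegral_iSup hmeasN hmonoN]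
    apply iSup_le
    intro N
    rw [← ofReal_integral_eq_lintegral_ofReal (hGint N)
      (Eventually.of_forall fun ω => pow_nonneg (hGnn N ω) _)]
    exact ENNReal.ofReal_le_ofReal (hGB N)
  have hgm : Measurable fun ω => (⨆ N, ENNReal.ofReal ((G N ω)^(k-1))) :=
    Measurable.iSup hmeasN
  have hfin : ∀ᵐ ω ∂P, (⨆ N, ENNReal.ofReal ((G N ω)^(k-1))) < ⊤ :=
    ae_lt_top hgm (lt_of_le_of_lt hlint ENNReal.ofReal_lt_top).ne
  have hcong : (fun ω => (⨆ n, f n ω)^(k-1))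
      =ᵐ[P] fun ω => (⨆ N, ENNReal.ofReal ((G N ω)^(k-1))).toReal := by
    filter_upwards [hfin] with ω hω
    have hle1 : ∀ N, (G N ω)^(k-1) ≤ (⨆ N, ENNReal.ofReal ((G N ω)^(k-1))).toReal := by
      intro N
      have h1 : ENNReal.ofReal ((G N ω)^(k-1)) ≤ ⨆ N, ENNReal.ofReal ((G N ω)^(k-1)) :=
        le_iSup (fun N => ENNReal.ofReal ((G N ω)^(k-1))) N
      have h2 := ENNReal.toReal_mono hω.ne h1
      rwa [ENNReal.toReal_ofReal (pow_nonneg (hGnn N ω) _)] at h2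
    set C' : ℝ := max 1 ((⨆ N, ENNReal.ofReal ((G N ω)^(k-1))).toReal) with hC'
    have hGC : ∀ N, G N ω ≤ C' := by
      intro N
      rcases le_total (G N ω) 1 with h | h
      · exact le_trans h (le_max_left _ _)
      · have h3 := le_self_pow₀ h (show k - 1 ≠ 0 by omega)
        exact le_trans (le_trans h3 (hle1 N)) (le_max_right _ _)
    have hbddf : BddAbove (Set.range fun n => f n ω) := by
      refine ⟨C', ?_⟩
      rintro x ⟨n, rfl⟩
      exact le_trans (hfleG n ω) (hGC n)
    have hbddG : BddAbove (Set.range fun N => G N ω) := by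
      refine ⟨C', ?_⟩
      rintro x ⟨N, rfl⟩
      exact hGC N
    have hFnn : 0 ≤ ⨆ n, f n ω := by
      have h := le_ciSup hbddf 0
      rw [hf0 ω] at h
      exact h
    have hGleF : ∀ N, G N ω ≤ ⨆ n, f n ω := by
      intro N
      apply Finset.sup'_le
      intro n hn
      exact le_ciSup hbddf n
    have hFG : (⨆ n, f n ω) = ⨆ N, G N ω :=
      le_antisymm (ciSup_le fun n => le_trans (hfleG n ω) (le_ciSup hbddG n))
        (ciSup_le fun N => hGleF N)
    have hcont : ContinuousAt (fun x : ℝ => ENNReal.ofReal ((max 0 x)^(k-1))) (⨆ N, G N ω) :=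
      (ENNReal.continuous_ofReal.comp
        ((continuous_pow _).comp (continuous_const.max continuous_id))).continuousAt
    have hmono2 : Monotone (fun x : ℝ => ENNReal.ofReal ((max 0 x)^(k-1))) := by
      intro a b hab
      exact ENNReal.ofReal_le_ofReal
        (pow_le_pow_left₀ (le_max_left _ _) (max_le_max le_rfl hab) _)
    have hcomm := hmono2.map_ciSup_of_continuousAt hcont hbddG
    have hgω : (⨆ N, ENNReal.ofReal ((G N ω)^(k-1)))
        = ENNReal.ofReal ((⨆ n, f n ω)^(k-1)) := by
      have e1 : ∀ N, ENNReal.ofReal ((G N ω)^(k-1))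
          = ENNReal.ofReal ((max 0 (G N ω))^(k-1)) := fun N => by
        rw [max_eq_right (hGnn N ω)]
      calc (⨆ N, ENNReal.ofReal ((G N ω)^(k-1)))
          = ⨆ N, ENNReal.ofReal ((max 0 (G N ω))^(k-1)) := iSup_congr e1
        _ = ENNReal.ofReal ((max 0 (⨆ N, G N ω))^(k-1)) := hcomm.symm
        _ = ENNReal.ofReal ((⨆ N, G N ω)^(k-1)) := by
            rw [max_eq_right (hFG ▸ hFnn)]
        _ = ENNReal.ofReal ((⨆ n, f n ω)^(k-1)) := by rw [← hFG]
    rw [hgω, ENNReal.toReal_ofReal (pow_nonneg hFnn _)]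
  have hintlim : Integrable (fun ω => (⨆ n, f n ω)^(k-1)) P := by
    apply Integrable.congr _ hcong.symm
    refine ⟨(ENNReal.measurable_toReal.comp hgm).aestronglyMeasurable, ?_⟩
    rw [hasFiniteIntegral_iff_ofReal (Eventually.of_forall fun ω => ENNReal.toReal_nonneg)]
    have heq : ∫⁻ ω, ENNReal.ofReal ((⨆ N, ENNReal.ofReal ((G N ω)^(k-1))).toReal) ∂P
        = ∫⁻ ω, (⨆ N, ENNReal.ofReal ((G N ω)^(k-1))) ∂P := by
      apply lintegral_congr_ae
      filter_upwards [hfin] with ω hω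
      exact ENNReal.ofReal_toReal hω.ne
    rw [heq]
    exact lt_of_le_of_lt hlint ENNReal.ofReal_lt_top
  exact hintlim
end
end

section
/- Let k ≥ 1, S ⊆ ℤ^m a k-dimensional vector semigroup, Z ≥ 0 a random variable with E Z^k < ∞, and (Z_x : x ∈ S) an almost independent family of copies of Z. Then almost surely Z_x / |x| → 0 as x ∈ S, |x| → ∞. -/
open Set Filter Topology MeasureTheory ProbabilityTheory Pointwise
open scoped ENNReal NNReal

noncomputable section

/-- In a subspace `W` of `ℝ^m` there is a set of at most `finrank W` coordinates
that separates points of `W`. -/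
lemma exists_coord_finset {m : ℕ} (W : Submodule ℝ (Fin m → ℝ)) :
    ∃ T : Finset (Fin m), T.card ≤ Module.finrank ℝ W ∧
      ∀ v ∈ W, (∀ i ∈ T, v i = 0) → v = 0 := by
  suffices H : ∀ n (W : Submodule ℝ (Fin m → ℝ)), Module.finrank ℝ W = n →
      ∃ T : Finset (Fin m), T.card ≤ Module.finrank ℝ W ∧
        ∀ v ∈ W, (∀ i ∈ T, v i = 0) → v = 0 from H _ W rfl
  intro n
  induction n using Nat.strong_induction_on with
  | _ n ih =>
  intro W h
  by_cases hW : W = ⊥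
  · exact ⟨∅, by simp, fun v hv _ => by simpa [hW] using hv⟩
  · obtain ⟨v, hvW, hv0⟩ := Submodule.exists_mem_ne_zero_of_ne_bot hW
    obtain ⟨i, hvi⟩ := Function.ne_iff.1 hv0
    set W' : Submodule ℝ (Fin m → ℝ) :=
      W ⊓ LinearMap.ker (LinearMap.proj i : (Fin m → ℝ) →ₗ[ℝ] ℝ) with hW'
    have hlt : W' < W := by
      refine lt_of_le_of_ne inf_le_left (fun hEq => hvi ?_)
      have : v ∈ W' := hEq ▸ hvW
      simpa using this.2
    have hrk : Module.finrank ℝ W' < Module.finrank ℝ W :=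
      Submodule.finrank_lt_finrank_of_lt hlt
    rw [h] at hrk
    obtain ⟨T', hT'card, hT'⟩ := ih _ hrk W' rfl
    refine ⟨insert i T', ?_, ?_⟩
    · calc (insert i T').card ≤ T'.card + 1 := Finset.card_insert_le _ _
        _ ≤ Module.finrank ℝ W' + 1 := by omega
        _ ≤ Module.finrank ℝ W := by omega

    · intro u huW hu
      have hui : u i = 0 := hu i (Finset.mem_insert_self _ _)
      have huW' : u ∈ W' := ⟨huW, by simpa using hui⟩
      exact hT' u huW' fun j hj => hu j (Finset.mem_insert_of_mem hj)

/-- A set of at most `k` coordinates separating points of `S`. -/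
lemma exists_coord_finset_S {m k : ℕ} (S : Set (Fin m → ℤ))
    (hdim : Module.finrank ℝ (Submodule.span ℝ (zc '' S)) = k) :
    ∃ T : Finset (Fin m), T.card ≤ k ∧
      ∀ x ∈ S, ∀ y ∈ S, (∀ i ∈ T, x i = y i) → x = y := by
  obtain ⟨T, hTcard, hT⟩ := exists_coord_finset (Submodule.span ℝ (zc '' S))
  refine ⟨T, hdim ▸ hTcard, fun x hx y hy hxy => ?_⟩
  have hmem : zc x - zc y ∈ Submodule.span ℝ (zc '' S) :=
    Submodule.sub_mem _ (Submodule.subset_span ⟨x, hx, rfl⟩)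
      (Submodule.subset_span ⟨y, hy, rfl⟩)
  have h0 : zc x - zc y = 0 := by
    refine hT _ hmem fun i hi => ?_
    simp [zc, Pi.sub_apply, hxy i hi]
  funext i
  have := congr_fun h0 i
  simp only [Pi.sub_apply, Pi.zero_apply, sub_eq_zero, zc] at this
  exact_mod_cast this

/-- for a `k`-dimensional vector semigroup `S` and an almost
independent family `(Z_x : x ∈ S)` of copies of a nonnegative `Z` with `EZ^k < ∞`,
almost surely `Z_x/|x| → 0` as `|x| → ∞` along `S`. -/
theorem stmt15 {m k : ℕ} (hk : 1 ≤ k)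
    {Ω : Type*} [MeasurableSpace Ω] (P : Measure Ω) [IsProbabilityMeasure P]
    (S : Set (Fin m → ℤ)) (hSne : S.Nonempty)
    (hSadd : ∀ x ∈ S, ∀ y ∈ S, x + y ∈ S)
    (hdim : Module.finrank ℝ (Submodule.span ℝ (zc '' S)) = k)
    (Z : Ω → ℝ) (hZm : Measurable Z) (hZnn : ∀ ω, 0 ≤ Z ω)
    (hZk : Integrable (fun ω => Z ω ^ k) P)
    (Zf : (Fin m → ℤ) → Ω → ℝ) (hZfm : ∀ x ∈ S, Measurable (Zf x))
    (hcopy : ∀ x ∈ S, IdentDistrib (Zf x) Z P P)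
    (hai : ∃ c : ℝ, ∀ A B : Set (Fin m → ℤ), A ⊆ S → B ⊆ S →
      (∀ x ∈ A, ∀ y ∈ B, c < ‖zc x - zc y‖) →
      IndepFun (fun ω => fun x : A => Zf x.1 ω) (fun ω => fun y : B => Zf y.1 ω) P) :
    ∀ᵐ ω ∂P, ∀ ε : ℝ, 0 < ε → ∃ R : ℝ, ∀ x ∈ S, R ≤ ‖zc x‖ →
      |Zf x ω| / ‖zc x‖ < ε := by
  classical
  obtain ⟨T, hTcard, hTinj⟩ := exists_coord_finset_S S hdim
  -- Borel–Cantelli for each ε = 1/(n+1)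
  have key : ∀ n : ℕ, ∀ᵐ ω ∂P,
      {x : ↥S | (1 / (n + 1) : ℝ) * ‖zc x.1‖ ≤ |Zf x.1 ω|}.Finite := by
    intro n
    set ε : ℝ := 1 / (n + 1) with hεdef
    have hεpos : 0 < ε := by positivity
    set A : ↥S → Set Ω := fun x => {ω | ε * ‖zc x.1‖ ≤ |Zf x.1 ω|} with hA
    set B : ↥S → Set Ω := fun x => {ω | ε * ‖zc x.1‖ ≤ Z ω} with hB
    have hBmeas : ∀ x : ↥S, MeasurableSet (B x) :=
      fun x => measurableSet_le measurable_const hZm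
    have hPeq : ∀ x : ↥S, P (A x) = P (B x) := by
      intro x
      have h1 : IdentDistrib (fun ω => |Zf x.1 ω|) (fun ω => |Z ω|) P P :=
        (hcopy x.1 x.2).comp measurable_abs
      have h2 := h1.measure_mem_eq (measurableSet_Ici (a := ε * ‖zc x.1‖))
      have hZabs : (fun ω => |Z ω|) = Z := funext fun ω => abs_of_nonneg (hZnn ω)
      rw [hZabs] at h2
      exact h2
    -- the pointwise counting bound
    have hpt : ∀ ω, (∑' x : ↥S, (B x).indicator (fun _ => (1 : ℝ≥0∞)) ω)
        ≤ ENNReal.ofReal ((2 * (Z ω / ε) + 3) ^ k) := by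
      intro ω
      set M : ℤ := ⌈Z ω / ε⌉ with hM
      have hZε : 0 ≤ Z ω / ε := div_nonneg (hZnn ω) hεpos.le
      have hM0 : 0 ≤ M := Int.ceil_nonneg hZε
      set G : Set ↥S := {x : ↥S | ε * ‖zc x.1‖ ≤ Z ω} with hG
      have hrw0 : (∑' x : ↥S, (B x).indicator (fun _ => (1 : ℝ≥0∞)) ω)
          = ∑' x : ↥S, G.indicator (fun _ => (1 : ℝ≥0∞)) x := by
        refine tsum_congr fun x => ?_
        by_cases h : ε * ‖zc x.1‖ ≤ Z ω
        · simp [Set.indicator_of_mem, h, hB, hG, Set.mem_setOf_eq]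
        · simp [Set.indicator_of_notMem, h, hB, hG, Set.mem_setOf_eq]
      have hrw : (∑' x : ↥S, (B x).indicator (fun _ => (1 : ℝ≥0∞)) ω)
          = ∑' x : ↥G, (1 : ℝ≥0∞) :=
        hrw0.trans (tsum_subtype G (fun _ => (1 : ℝ≥0∞))).symm
      rw [hrw]
      -- inject G into a finite box
      have hbox : ∀ x : ↥G, ∀ i : Fin m, x.1.1 i ∈ Finset.Icc (-M) M := by
        intro x i
        have hx : ε * ‖zc x.1.1‖ ≤ Z ω := x.2
        have hnorm : ‖zc x.1.1‖ ≤ Z ω / ε := (le_div_iff₀' hεpos).2 hx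
        have hcoord : |(x.1.1 i : ℝ)| ≤ ‖zc x.1.1‖ := by
          have := norm_le_pi_norm (zc x.1.1) i
          simpa [zc, Real.norm_eq_abs] using this
        have h1 : |(x.1.1 i : ℝ)| ≤ (M : ℝ) :=
          le_trans (hcoord.trans hnorm) (Int.le_ceil _)
        have h2 : |x.1.1 i| ≤ M := by exact_mod_cast (by push_cast; exact h1 :
          ((|x.1.1 i| : ℤ) : ℝ) ≤ (M : ℝ))
        simpa [Finset.mem_Icc] using abs_le.1 h2
      let cod := (↥(T : Finset (Fin m)) → ↥(Finset.Icc (-M) M))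
      let φ : ↥G → cod := fun x => fun i => ⟨x.1.1 i.1, hbox x i.1⟩
      have hφinj : Function.Injective φ := by
        intro x y hxy
        have : x.1.1 = y.1.1 := by
          refine hTinj x.1.1 x.1.2 y.1.1 y.1.2 fun i hi => ?_
          have := congr_fun hxy ⟨i, hi⟩
          simpa [φ, Subtype.ext_iff] using this
        exact Subtype.ext (Subtype.ext this)
      have hle : (∑' x : ↥G, (1 : ℝ≥0∞)) ≤ ∑' y : cod, (1 : ℝ≥0∞) :=
        ENNReal.tsum_comp_le_tsum_of_injective hφinj (fun _ => 1)
      have hcard : (∑' y : cod, (1 : ℝ≥0∞)) = (Fintype.card cod : ℝ≥0∞) := by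
        rw [tsum_fintype]
        simp
      have hcardval : Fintype.card cod = (2 * M + 1).toNat ^ T.card := by
        rw [Fintype.card_fun]
        congr 1
        · rw [Fintype.card_coe, Int.card_Icc]
          congr 1
          ring
        · exact Fintype.card_coe _
      -- numeric bound
      have hnum : ((2 * M + 1).toNat ^ T.card : ℝ) ≤ (2 * (Z ω / ε) + 3) ^ k := by
        have htn : (((2 * M + 1).toNat : ℤ) : ℝ) = 2 * (M : ℝ) + 1 := by
          rw [Int.toNat_of_nonneg (by omega)]
          push_cast
          ring
        have hc1 : (1 : ℝ) ≤ 2 * (M : ℝ) + 1 := by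
          have : (0 : ℝ) ≤ (M : ℝ) := by exact_mod_cast hM0
          linarith
        have hcb : 2 * (M : ℝ) + 1 ≤ 2 * (Z ω / ε) + 3 := by
          have := Int.ceil_lt_add_one (Z ω / ε)
          rw [← hM] at this
          linarith
        calc ((2 * M + 1).toNat ^ T.card : ℝ)
            = (2 * (M : ℝ) + 1) ^ T.card := by
              rw [← htn]; push_cast; ring
          _ ≤ (2 * (M : ℝ) + 1) ^ k := pow_le_pow_right₀ hc1 hTcard
          _ ≤ (2 * (Z ω / ε) + 3) ^ k := pow_le_pow_left₀ (by linarith) hcb k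
      calc (∑' x : ↥G, (1 : ℝ≥0∞)) ≤ (Fintype.card cod : ℝ≥0∞) := hcard ▸ hle
        _ = ENNReal.ofReal ((Fintype.card cod : ℝ)) := by
            rw [ENNReal.ofReal_natCast]
        _ ≤ ENNReal.ofReal ((2 * (Z ω / ε) + 3) ^ k) := by
            apply ENNReal.ofReal_le_ofReal
            rw [hcardval]
            exact_mod_cast hnum
    -- integrability of the bound
    have hint : Integrable (fun ω => (2 * (Z ω / ε) + 3) ^ k) P := by
      have hintg : Integrable (fun ω => (2 / ε + 3) ^ k * (2 ^ k * (Z ω ^ k + 1))) P :=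
        ((hZk.add (integrable_const 1)).const_mul _).const_mul _
      refine hintg.mono' ?_ ?_
      · exact (((hZm.div_const ε).const_mul 2).add_const 3).pow_const k
          |>.aestronglyMeasurable
      · filter_upwards with ω
        have hZ0 := hZnn ω
        have hε0 := hεpos
        have hstep1 : 2 * (Z ω / ε) + 3 ≤ (2 / ε + 3) * (Z ω + 1) := by
          have h1 : 2 * (Z ω / ε) = (2 / ε) * Z ω := by ring
          have h2 : (0 : ℝ) ≤ 2 / ε := by positivity
          nlinarith
        have hb0 : (0 : ℝ) ≤ 2 * (Z ω / ε) + 3 := by positivity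
        have hstep2 : (Z ω + 1) ^ k ≤ 2 ^ k * (Z ω ^ k + 1) := by
          rcases le_total (Z ω) 1 with h | h
          · have : (Z ω + 1) ^ k ≤ 2 ^ k := pow_le_pow_left₀ (by linarith) (by linarith) k
            nlinarith [pow_nonneg hZ0 k, pow_pos (show (0:ℝ) < 2 by norm_num) k]
          · have h1 : (Z ω + 1) ^ k ≤ (2 * Z ω) ^ k :=
              pow_le_pow_left₀ (by linarith) (by linarith) k
            have h2 : (2 * Z ω) ^ k = 2 ^ k * Z ω ^ k := mul_pow 2 (Z ω) k
            nlinarith [pow_pos (show (0:ℝ) < 2 by norm_num) k]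
        have : (2 * (Z ω / ε) + 3) ^ k ≤ ((2 / ε + 3) * (Z ω + 1)) ^ k :=
          pow_le_pow_left₀ hb0 hstep1 k
        rw [Real.norm_eq_abs, abs_of_nonneg (pow_nonneg hb0 k)]
        calc (2 * (Z ω / ε) + 3) ^ k ≤ ((2 / ε + 3) * (Z ω + 1)) ^ k := this
          _ = (2 / ε + 3) ^ k * (Z ω + 1) ^ k := mul_pow _ _ _
          _ ≤ (2 / ε + 3) ^ k * (2 ^ k * (Z ω ^ k + 1)) := by
              have : (0 : ℝ) ≤ (2 / ε + 3) ^ k := by positivity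
              nlinarith [hstep2]
    have hlint : (∫⁻ ω, ENNReal.ofReal ((2 * (Z ω / ε) + 3) ^ k) ∂P) < ⊤ :=
      hint.lintegral_lt_top
    -- putting it together
    have hsum : (∑' x : ↥S, P (A x)) ≠ ⊤ := by
      have h1 : (∑' x : ↥S, P (A x)) = ∑' x : ↥S, P (B x) := tsum_congr hPeq
      have h2 : (∑' x : ↥S, P (B x))
          = ∫⁻ ω, (∑' x : ↥S, (B x).indicator (fun _ => (1 : ℝ≥0∞)) ω) ∂P := by
        rw [lintegral_tsum (fun x =>
          ((measurable_const.indicator (hBmeas x)).aemeasurable))]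
        refine (tsum_congr fun x => ?_).symm
        rw [lintegral_indicator (hBmeas x)]
        simp
      have h3 : (∫⁻ ω, (∑' x : ↥S, (B x).indicator (fun _ => (1 : ℝ≥0∞)) ω) ∂P)
          ≤ ∫⁻ ω, ENNReal.ofReal ((2 * (Z ω / ε) + 3) ^ k) ∂P :=
        lintegral_mono hpt
      rw [h1, h2]
      exact (h3.trans_lt hlint).ne
    have hBC := MeasureTheory.ae_finite_setOf_mem (μ := P) hsum
    filter_upwards [hBC] with ω hω
    exact hω
  have keyAll : ∀ᵐ ω ∂P, ∀ n : ℕ,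
      {x : ↥S | (1 / (n + 1) : ℝ) * ‖zc x.1‖ ≤ |Zf x.1 ω|}.Finite :=
    (ae_all_iff).2 key
  filter_upwards [keyAll] with ω hω ε hεpos
  obtain ⟨n, hn⟩ := exists_nat_one_div_lt hεpos
  have hfin := hω n
  obtain ⟨b, hb⟩ := (hfin.image (fun x => ‖zc x.1‖)).bddAbove
  refine ⟨max b 0 + 1, fun x hx hR => ?_⟩
  have hxpos : 0 < ‖zc x‖ := lt_of_lt_of_le (by positivity) hR
  have hxnot : ¬ ((1 / (n + 1) : ℝ) * ‖zc x‖ ≤ |Zf x ω|) := by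
    intro hmem
    have hble : ‖zc x‖ ≤ b := hb ⟨⟨x, hx⟩, hmem, rfl⟩
    have h1 : b ≤ max b 0 := le_max_left _ _
    linarith
  have hlt : |Zf x ω| < (1 / (n + 1) : ℝ) * ‖zc x‖ := lt_of_not_ge hxnot
  have : |Zf x ω| / ‖zc x‖ < 1 / (n + 1 : ℝ) := by
    rw [div_lt_iff₀ hxpos]
    linarith
  linarith
end
end

section
/- Let f = (f^x : x ∈ S) be an ergodic measure-preserving action of a vector semigroup S ⊆ ℤ^m on a probability space (Ω, P), and let h be an f-subadditive random function on S with E h(x)^+ < ∞ for all x ∈ S. Define q(x) as the almost-sure (constant) limit of h(nx)/n given by the Kingman subadditive ergodic theorem. Then q is a ℤ-gauge on S: q(x+y) ≤ q(x) + q(y) and q(tx) = t·q(x) for all x, y ∈ S and t ∈ ℕ. -/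
open Set Filter Topology MeasureTheory ProbabilityTheory Pointwise

noncomputable section

/-- probability of sets converges to 1 when a.e. point is eventually in them -/
lemma aux_tendsto_prob {Ω : Type*} [MeasurableSpace Ω] (P : Measure Ω) [IsProbabilityMeasure P]
    {C : ℕ → Set Ω} (hm : ∀ n, MeasurableSet (C n))
    (hae : ∀ᵐ ω ∂P, ∀ᶠ n in atTop, ω ∈ C n) :
    Tendsto (fun n => (P (C n)).toReal) atTop (𝓝 1) := by
  have h1 : Tendsto (fun n => P (C n)) atTop (𝓝 (P univ)) := by
    refine tendsto_measure_of_ae_tendsto_indicator_of_isFiniteMeasure atTop MeasurableSet.univ hm ?_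
    filter_upwards [hae] with ω hω using hω.mono fun n hn => by simpa using hn
  have h2 := (ENNReal.tendsto_toReal (by simp [measure_univ] : P univ ≠ ⊤)).comp h1
  simpa [measure_univ, Function.comp_def] using h2

lemma aux_compl_toReal {Ω : Type*} [MeasurableSpace Ω] (P : Measure Ω) [IsProbabilityMeasure P]
    {s : Set Ω} (hs : MeasurableSet s) : (P sᶜ).toReal = 1 - (P s).toReal := by
  rw [prob_compl_eq_one_sub hs, ENNReal.toReal_sub_of_le prob_le_one ENNReal.one_ne_top]
  simp

lemma aux_abc {u v : EReal} {c₀ : ℝ} (hu : u ≠ ⊤) (hv : v ≠ ⊤) (hlt : u + v < (c₀ : EReal)) :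
    ∃ a b c : ℝ, u < (a : EReal) ∧ v < (b : EReal) ∧ a + b ≤ c ∧ (c : EReal) < (c₀ : EReal) := by
  induction u using EReal.rec with
  | top => exact absurd rfl hu
  | bot =>
    induction v using EReal.rec with
    | top => exact absurd rfl hv
    | bot =>
      exact ⟨c₀ - 2, 1, c₀ - 1, EReal.bot_lt_coe _, EReal.bot_lt_coe _, by linarith,
        by exact_mod_cast (by linarith : c₀ - 1 < c₀)⟩
    | coe β =>
      exact ⟨c₀ - 2 - β, β + 1, c₀ - 1, EReal.bot_lt_coe _,
        by exact_mod_cast (by linarith : β < β + 1), by linarith,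
        by exact_mod_cast (by linarith : c₀ - 1 < c₀)⟩
  | coe α =>
    induction v using EReal.rec with
    | top => exact absurd rfl hv
    | bot =>
      exact ⟨α + 1, c₀ - 2 - α, c₀ - 1, by exact_mod_cast (by linarith : α < α + 1),
        EReal.bot_lt_coe _, by linarith, by exact_mod_cast (by linarith : c₀ - 1 < c₀)⟩
    | coe β =>
      have hab : α + β < c₀ := by exact_mod_cast hlt
      refine ⟨α + (c₀ - α - β) / 3, β + (c₀ - α - β) / 3, c₀ - (c₀ - α - β) / 3, ?_, ?_,
        by linarith, ?_⟩
      · exact_mod_cast (by linarith : α < α + (c₀ - α - β) / 3)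
      · exact_mod_cast (by linarith : β < β + (c₀ - α - β) / 3)
      · exact_mod_cast (by linarith : c₀ - (c₀ - α - β) / 3 < c₀)

/-- the limit function `q(x) = lim h(nx)/n` of an `f`-subadditive
random function `h` (with `E h(x)⁺ < ∞`) under an ergodic measure-preserving action
is a ℤ-gauge on `S`. -/
theorem stmt16 {m : ℕ} {Ω : Type*} [MeasurableSpace Ω] (P : Measure Ω)
    [IsProbabilityMeasure P]
    (S : Set (Fin m → ℤ)) (hSne : S.Nonempty)
    (hSadd : ∀ x ∈ S, ∀ y ∈ S, x + y ∈ S)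
    (f : (Fin m → ℤ) → Ω → Ω) (hfm : ∀ x ∈ S, Measurable (f x))
    (hact : ∀ x ∈ S, ∀ y ∈ S, f (x + y) = f x ∘ f y)
    (hid : (0 : Fin m → ℤ) ∈ S → f 0 = id)
    (hmp : ∀ x ∈ S, MeasurePreserving (f x) P P)
    (herg : ∀ x ∈ S, x ≠ 0 → Ergodic (f x) P)
    (h : (Fin m → ℤ) → Ω → ℝ) (hhm : ∀ x ∈ S, Measurable (h x))
    (hh0 : (0 : Fin m → ℤ) ∈ S → ∀ ω, h 0 ω = 0)
    (hsub : ∀ x ∈ S, ∀ y ∈ S, ∀ ω, h (x + y) ω ≤ h x ω + h y (f x ω))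
    (hint : ∀ x ∈ S, Integrable (fun ω => max (h x ω) 0) P)
    (q : (Fin m → ℤ) → EReal)
    (hq : ∀ x ∈ S, ∀ᵐ ω ∂P,
      Tendsto (fun n : ℕ => ((h (n • x) ω / n : ℝ) : EReal)) atTop (nhds (q x))) :
    (∀ x ∈ S, ∀ y ∈ S, q (x + y) ≤ q x + q y) ∧
    (∀ x ∈ S, ∀ t : ℕ, 0 < t → q (t • x) = ((t : ℝ) : EReal) * q x) := by
  haveI : (MeasureTheory.ae P).NeBot := by
    exact ae_neBot.mpr (IsProbabilityMeasure.ne_zero P)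
  have hS : ∀ x ∈ S, ∀ n : ℕ, 0 < n → n • x ∈ S := by
    intro x hx n hn
    induction n with
    | zero => omega
    | succ k ih =>
      rcases Nat.eq_zero_or_pos k with hk | hk
      · subst hk; simpa using hx
      · rw [succ_nsmul]; exact hSadd _ (ih hk) _ hx
  have hiter : ∀ x ∈ S, ∀ n : ℕ, 0 < n → f (n • x) = (f x)^[n] := by
    intro x hx n hn
    induction n with
    | zero => omega
    | succ k ih =>
      rcases Nat.eq_zero_or_pos k with hk | hk
      · subst hk; simp
      · rw [succ_nsmul, hact _ (hS x hx k hk) _ hx, ih hk, Function.iterate_succ]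
  have hchain : ∀ x ∈ S, ∀ n : ℕ, 0 < n → ∀ ω,
      h (n • x) ω ≤ ∑ k ∈ Finset.range n, max (h x ((f x)^[k] ω)) 0 := by
    intro x hx n hn
    induction n with
    | zero => omega
    | succ k ih =>
      intro ω
      rcases Nat.eq_zero_or_pos k with hk | hk
      · subst hk; simpa using le_max_left (h x ω) 0
      · calc h ((k + 1) • x) ω = h (k • x + x) ω := by rw [succ_nsmul]
          _ ≤ h (k • x) ω + h x (f (k • x) ω) := hsub _ (hS x hx k hk) _ hx ω
          _ ≤ (∑ j ∈ Finset.range k, max (h x ((f x)^[j] ω)) 0)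
              + max (h x ((f x)^[k] ω)) 0 := by
                refine add_le_add (ih hk ω) ?_
                rw [hiter x hx k hk]; exact le_max_left _ _
          _ = _ := (Finset.sum_range_succ _ k).symm
  have hq0 : (0 : Fin m → ℤ) ∈ S → q 0 = 0 := by
    intro h0
    obtain ⟨ω, hω⟩ := (hq 0 h0).exists
    have he : (fun n : ℕ => ((h (n • (0 : Fin m → ℤ)) ω / n : ℝ) : EReal))
        = fun _ => (0 : EReal) := by
      funext n; simp [smul_zero, hh0 h0]
    rw [he] at hω
    exact tendsto_nhds_unique hω tendsto_const_nhds
  have hqtop : ∀ x ∈ S, q x ≠ ⊤ := by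
    intro x hx
    rcases eq_or_ne x 0 with rfl | hx0
    · rw [hq0 hx]; simp
    intro htop
    set K := ∫ ω, max (h x ω) 0 ∂P with hKdef
    have hK0 : 0 ≤ K := integral_nonneg fun ω => le_max_right _ _
    have hIntk : ∀ k : ℕ, Integrable (fun ω => max (h x ((f x)^[k] ω)) 0) P := fun k =>
      (((hmp x hx).iterate k).integrable_comp (hint x hx).aestronglyMeasurable).mpr (hint x hx)
    have hconst : ∀ k : ℕ, ∫ ω, max (h x ((f x)^[k] ω)) 0 ∂P = K := by
      intro k
      have hmeq := ((hmp x hx).iterate k).map_eq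
      calc ∫ ω, max (h x ((f x)^[k] ω)) 0 ∂P
          = ∫ ω, max (h x ω) 0 ∂(Measure.map ((f x)^[k]) P) :=
            (integral_map ((hmp x hx).iterate k).measurable.aemeasurable
              (hmeq.symm ▸ (hint x hx).aestronglyMeasurable)).symm
        _ = K := by rw [hmeq]
    have hbound : ∀ n : ℕ, 0 < n → ∫ ω, max (h (n • x) ω) 0 ∂P ≤ n * K := by
      intro n hn
      calc ∫ ω, max (h (n • x) ω) 0 ∂P
          ≤ ∫ ω, ∑ k ∈ Finset.range n, max (h x ((f x)^[k] ω)) 0 ∂P := by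
            refine integral_mono (hint _ (hS x hx n hn))
              (integrable_finset_sum _ fun k _ => hIntk k) ?_
            intro ω
            exact max_le (hchain x hx n hn ω) (Finset.sum_nonneg fun k _ => le_max_right _ _)
        _ = ∑ k ∈ Finset.range n, ∫ ω, max (h x ((f x)^[k] ω)) 0 ∂P :=
            integral_finset_sum _ fun k _ => hIntk k
        _ = n * K := by simp [hconst, Finset.sum_const, nsmul_eq_mul]
    set c : ℝ := 2 * K + 1 with hcdef
    set C : ℕ → Set Ω := fun n =>
      if n = 0 then univ else {ω | c * n ≤ max (h (n • x) ω) 0} with hCdef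
    have hCm : ∀ n, MeasurableSet (C n) := by
      intro n
      rcases Nat.eq_zero_or_pos n with hn | hn
      · simp [hCdef, hn]
      · simp only [hCdef, if_neg hn.ne']
        exact measurableSet_le measurable_const ((hhm _ (hS x hx n hn)).max measurable_const)
    have hae : ∀ᵐ ω ∂P, ∀ᶠ n in atTop, ω ∈ C n := by
      filter_upwards [hq x hx] with ω hω
      rw [htop] at hω
      have h1 : ∀ᶠ n : ℕ in atTop, ((c : ℝ) : EReal) < ((h (n • x) ω / n : ℝ) : EReal) :=
        hω.eventually_const_lt (EReal.coe_lt_top c)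
      filter_upwards [h1, eventually_gt_atTop 0] with n hn hn0
      simp only [hCdef, if_neg hn0.ne', mem_setOf_eq]
      have h2 : c < h (n • x) ω / n := EReal.coe_lt_coe_iff.mp hn
      have hnn : (0 : ℝ) < n := by exact_mod_cast hn0
      exact ((lt_div_iff₀ hnn).mp h2).le.trans (le_max_left _ _)
    have h2 : ∀ᶠ n in atTop, (1 / 2 : ℝ) < (P (C n)).toReal :=
      (aux_tendsto_prob P hCm hae).eventually_const_lt (by norm_num)
    obtain ⟨n, hn2, hn0⟩ := (h2.and (eventually_gt_atTop 0)).exists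
    have hmk : c * n * (P {ω | c * n ≤ max (h (n • x) ω) 0}).toReal
        ≤ ∫ ω, max (h (n • x) ω) 0 ∂P :=
      mul_meas_ge_le_integral_of_nonneg (ae_of_all _ fun ω => le_max_right _ _)
        (hint _ (hS x hx n hn0)) (c * n)
    have hCn : C n = {ω | c * n ≤ max (h (n • x) ω) 0} := by simp [hCdef, hn0.ne']
    rw [← hCn] at hmk
    have h3 := hmk.trans (hbound n hn0)
    have hn1 : (1 : ℝ) ≤ n := by exact_mod_cast hn0
    have hcn : (0 : ℝ) < c * n := by nlinarith
    have h4 := mul_lt_mul_of_pos_left hn2 hcn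
    nlinarith [h3, h4, hn1, hK0]
  constructor
  · intro x hx y hy
    by_contra hcon
    have hlt : q x + q y < q (x + y) := not_le.mp hcon
    have hxyS := hSadd x hx y hy
    have hbot : (⊥ : EReal) < q (x + y) := lt_of_le_of_lt bot_le hlt
    have hco : q (x + y) = ((q (x + y)).toReal : EReal) :=
      (EReal.coe_toReal (hqtop _ hxyS) hbot.ne').symm
    rw [hco] at hlt
    obtain ⟨a, b, c, hua, hvb, habc, hcc⟩ := aux_abc (hqtop x hx) (hqtop y hy) hlt
    set A : ℕ → Set Ω := fun n =>
      if n = 0 then univ else {ω | h (n • x) ω < a * n} with hAdef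
    set B : ℕ → Set Ω := fun n =>
      if n = 0 then univ else {ω | h (n • y) ω < b * n} with hBdef
    set D : ℕ → Set Ω := fun n =>
      if n = 0 then univ else {ω | c * n < h (n • (x + y)) ω} with hDdef
    have hAm : ∀ n, MeasurableSet (A n) := by
      intro n
      rcases Nat.eq_zero_or_pos n with hn | hn
      · simp [hAdef, hn]
      · simp only [hAdef, if_neg hn.ne']
        exact measurableSet_lt (hhm _ (hS x hx n hn)) measurable_const
    have hBm : ∀ n, MeasurableSet (B n) := by
      intro n
      rcases Nat.eq_zero_or_pos n with hn | hn
      · simp [hBdef, hn]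
      · simp only [hBdef, if_neg hn.ne']
        exact measurableSet_lt (hhm _ (hS y hy n hn)) measurable_const
    have hDm : ∀ n, MeasurableSet (D n) := by
      intro n
      rcases Nat.eq_zero_or_pos n with hn | hn
      · simp [hDdef, hn]
      · simp only [hDdef, if_neg hn.ne']
        exact measurableSet_lt measurable_const (hhm _ (hS _ hxyS n hn))
    have hAae : ∀ᵐ ω ∂P, ∀ᶠ n in atTop, ω ∈ A n := by
      filter_upwards [hq x hx] with ω hω
      have h1 : ∀ᶠ n : ℕ in atTop, ((h (n • x) ω / n : ℝ) : EReal) < ((a : ℝ) : EReal) :=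
        hω.eventually_lt_const hua
      filter_upwards [h1, eventually_gt_atTop 0] with n hn hn0
      simp only [hAdef, if_neg hn0.ne', mem_setOf_eq]
      have h2 : h (n • x) ω / n < a := EReal.coe_lt_coe_iff.mp hn
      have hnn : (0 : ℝ) < n := by exact_mod_cast hn0
      exact (div_lt_iff₀ hnn).mp h2
    have hBae : ∀ᵐ ω ∂P, ∀ᶠ n in atTop, ω ∈ B n := by
      filter_upwards [hq y hy] with ω hω
      have h1 : ∀ᶠ n : ℕ in atTop, ((h (n • y) ω / n : ℝ) : EReal) < ((b : ℝ) : EReal) :=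
        hω.eventually_lt_const hvb
      filter_upwards [h1, eventually_gt_atTop 0] with n hn hn0
      simp only [hBdef, if_neg hn0.ne', mem_setOf_eq]
      have h2 : h (n • y) ω / n < b := EReal.coe_lt_coe_iff.mp hn
      have hnn : (0 : ℝ) < n := by exact_mod_cast hn0
      exact (div_lt_iff₀ hnn).mp h2
    have hDae : ∀ᵐ ω ∂P, ∀ᶠ n in atTop, ω ∈ D n := by
      filter_upwards [hq _ hxyS] with ω hω
      rw [hco] at hω
      have h1 : ∀ᶠ n : ℕ in atTop, ((c : ℝ) : EReal) < ((h (n • (x + y)) ω / n : ℝ) : EReal) :=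
        hω.eventually_const_lt hcc
      filter_upwards [h1, eventually_gt_atTop 0] with n hn hn0
      simp only [hDdef, if_neg hn0.ne', mem_setOf_eq]
      have h2 : c < h (n • (x + y)) ω / n := EReal.coe_lt_coe_iff.mp hn
      have hnn : (0 : ℝ) < n := by exact_mod_cast hn0
      exact (lt_div_iff₀ hnn).mp h2
    have hevA : ∀ᶠ n in atTop, (3 / 4 : ℝ) < (P (A n)).toReal :=
      (aux_tendsto_prob P hAm hAae).eventually_const_lt (by norm_num)
    have hevB : ∀ᶠ n in atTop, (3 / 4 : ℝ) < (P (B n)).toReal :=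
      (aux_tendsto_prob P hBm hBae).eventually_const_lt (by norm_num)
    have hevD : ∀ᶠ n in atTop, (3 / 4 : ℝ) < (P (D n)).toReal :=
      (aux_tendsto_prob P hDm hDae).eventually_const_lt (by norm_num)
    obtain ⟨N, ⟨⟨hNA, hNB⟩, hND⟩, hN0⟩ :=
      (((hevA.and hevB).and hevD).and (eventually_gt_atTop 0)).exists
    have hAN : A N = {ω | h (N • x) ω < a * N} := by simp [hAdef, hN0.ne']
    have hBN : B N = {ω | h (N • y) ω < b * N} := by simp [hBdef, hN0.ne']
    have hDN : D N = {ω | c * N < h (N • (x + y)) ω} := by simp [hDdef, hN0.ne']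
    set Bp : Set Ω := (f (N • x)) ⁻¹' (B N) with hBpdef
    have hBpm : MeasurableSet Bp := (hfm _ (hS x hx N hN0)) (hBm N)
    have hpre : P Bp = P (B N) :=
      (hmp _ (hS x hx N hN0)).measure_preimage (hBm N).nullMeasurableSet
    have hne : (A N ∩ Bp ∩ D N).Nonempty := by
      rw [nonempty_iff_ne_empty]
      intro hemp
      have hsub2 : (univ : Set Ω) ⊆ (A N)ᶜ ∪ Bpᶜ ∪ (D N)ᶜ := by
        intro ω _
        by_contra hcontra
        simp only [mem_union, mem_compl_iff, not_or, not_not] at hcontra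
        have hmem : ω ∈ A N ∩ Bp ∩ D N := ⟨⟨hcontra.1.1, hcontra.1.2⟩, hcontra.2⟩
        rw [hemp] at hmem
        exact hmem
      have h1 : (1 : ℝ) ≤ (P ((A N)ᶜ ∪ Bpᶜ ∪ (D N)ᶜ)).toReal := by
        have hm1 := measure_mono (μ := P) hsub2
        have hm2 := ENNReal.toReal_mono (measure_ne_top P _) hm1
        simpa [measure_univ] using hm2
      have h2 : (P ((A N)ᶜ ∪ Bpᶜ ∪ (D N)ᶜ)).toReal
          ≤ (P (A N)ᶜ).toReal + (P Bpᶜ).toReal + (P (D N)ᶜ).toReal := by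
        calc (P ((A N)ᶜ ∪ Bpᶜ ∪ (D N)ᶜ)).toReal
            ≤ (P (A N)ᶜ + P Bpᶜ + P (D N)ᶜ).toReal := by
              refine ENNReal.toReal_mono ?_ ?_
              · exact ENNReal.add_ne_top.mpr ⟨ENNReal.add_ne_top.mpr
                  ⟨measure_ne_top P _, measure_ne_top P _⟩, measure_ne_top P _⟩
              · exact le_trans (measure_union_le _ _)
                  (add_le_add_left (measure_union_le _ _) _)
          _ = (P (A N)ᶜ).toReal + (P Bpᶜ).toReal + (P (D N)ᶜ).toReal := by
              rw [ENNReal.toReal_add (ENNReal.add_ne_top.mpr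
                  ⟨measure_ne_top P _, measure_ne_top P _⟩) (measure_ne_top P _),
                ENNReal.toReal_add (measure_ne_top P _) (measure_ne_top P _)]
      have hcA : (P (A N)ᶜ).toReal = 1 - (P (A N)).toReal := aux_compl_toReal P (hAm N)
      have hcB : (P Bpᶜ).toReal = 1 - (P (B N)).toReal := by
        rw [aux_compl_toReal P hBpm, hpre]
      have hcD : (P (D N)ᶜ).toReal = 1 - (P (D N)).toReal := aux_compl_toReal P (hDm N)
      rw [hcA, hcB, hcD] at h2
      linarith
    obtain ⟨ω, ⟨hωA, hωB⟩, hωD⟩ := hne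
    rw [hAN, mem_setOf_eq] at hωA
    rw [hDN, mem_setOf_eq] at hωD
    rw [hBpdef, mem_preimage, hBN, mem_setOf_eq] at hωB
    have hs1 : h (N • (x + y)) ω ≤ h (N • x) ω + h (N • y) (f (N • x) ω) := by
      rw [smul_add]
      exact hsub _ (hS x hx N hN0) _ (hS y hy N hN0) ω
    have habN : (a + b) * N ≤ c * N :=
      mul_le_mul_of_nonneg_right habc (Nat.cast_nonneg N)
    nlinarith [hωA, hωB, hωD, hs1, habN]
  · intro x hx t ht
    have htxS : (t : ℕ) • x ∈ S := hS x hx t ht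
    obtain ⟨ω, hω1, hω2⟩ := ((hq x hx).and (hq _ htxS)).exists
    have htk : Tendsto (fun k : ℕ => t * k) atTop atTop :=
      tendsto_atTop_mono (fun k => Nat.le_mul_of_pos_left k ht) tendsto_id
    have h2 := hω1.comp htk
    have ht' : ((t : ℝ)) ≠ 0 := Nat.cast_ne_zero.mpr ht.ne'
    have hcont : ContinuousAt (fun p : EReal × EReal => p.1 * p.2) (((t : ℝ) : EReal), q x) :=
      EReal.continuousAt_mul (Or.inl (EReal.coe_ne_zero.mpr ht'))
        (Or.inl (EReal.coe_ne_zero.mpr ht')) (Or.inl (EReal.coe_ne_bot _))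
        (Or.inl (EReal.coe_ne_top _))
    have h3 : Tendsto (fun k : ℕ =>
          ((((t : ℝ) : EReal), ((h ((t * k) • x) ω / ((t * k : ℕ) : ℝ) : ℝ) : EReal))))
        atTop (𝓝 (((t : ℝ) : EReal), q x)) :=
      tendsto_const_nhds.prodMk_nhds h2
    have h4 := hcont.tendsto.comp h3
    have h5 : Tendsto (fun k : ℕ => ((h (k • (t • x)) ω / (k : ℝ) : ℝ) : EReal)) atTop
        (𝓝 (((t : ℝ) : EReal) * q x)) := by
      refine h4.congr fun k => ?_
      show ((t : ℝ) : EReal) * ((h ((t * k) • x) ω / ((t * k : ℕ) : ℝ) : ℝ) : EReal)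
        = ((h (k • (t • x)) ω / (k : ℝ) : ℝ) : EReal)
      rw [← EReal.coe_mul]
      congr 1
      have hxy : k • (t • x) = (t * k) • x := by rw [smul_smul, Nat.mul_comm]
      rw [hxy]
      rcases Nat.eq_zero_or_pos k with hk | hk
      · subst hk; simp
      · have hk' : ((k : ℝ)) ≠ 0 := Nat.cast_ne_zero.mpr hk.ne'
        push_cast
        field_simp
    exact tendsto_nhds_unique hω2 h5
end
end
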